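/- arXiv:2009.06840 — 10 statements merged into one kernel-verified Lean document; each statement's English description precedes it below -/
import Mathlib

section
/- Let g and h be distinct transpositions in the symmetric group S_n (n ≥ 3) with disjoint supports (so gh = hg). Then the only common neighbors of g and h in the complete transposition graph CT_n (the Cayley graph on S_n with connection set all transpositions) are the identity and gh; hence there is exactly one 4-cycle in CT_n passing through the path (g, id, h). -/
/-- The complete transposition graph: the Cayley graph on the symmetric group
`Equiv.Perm (Fin n)` whose connection set is the set of all transpositions. -/
def CT (n : ℕ) : SimpleGraph (Equiv.Perm (Fin n)) where
  Adj x y := (y * x⁻¹).IsSwap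
  symm := by
    constructor
    rintro x y ⟨a, b, hab, h⟩
    refine ⟨a, b, hab, ?_⟩
    rw [← Equiv.swap_inv a b, ← h, mul_inv_rev, inv_inv]
  loopless := by
    constructor
    rintro x ⟨a, b, hab, h⟩
    rw [mul_inv_cancel] at h
    have hba : b = a := by
      simpa [Equiv.swap_apply_left] using congrArg (fun f => f a) h.symm
    exact hab hba.symm

lemma isSwap_inv_eq {α : Type*} [DecidableEq α] {g : Equiv.Perm α} (hg : g.IsSwap) :
    g⁻¹ = g := by
  obtain ⟨a, b, hab, rfl⟩ := hg
  exact Equiv.swap_inv a b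

lemma swap_eq_of_mem_support {α : Type*} [DecidableEq α] [Fintype α]
    {g : Equiv.Perm α} (hg : g.IsSwap) {p : α} (hp : p ∈ g.support) :
    Equiv.swap p (g p) = g := by
  obtain ⟨a, b, hab, rfl⟩ := hg
  rw [Equiv.Perm.support_swap hab, Finset.mem_insert, Finset.mem_singleton] at hp
  rcases hp with rfl | rfl
  · rw [Equiv.swap_apply_left]
  · rw [Equiv.swap_apply_right, Equiv.swap_comm]

/-- Common neighbors of two distinct disjoint-support transpositions `g, h` in `CT n`
are exactly `id` and `g*h`; hence exactly one common neighbor other than `id`, i.e.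
exactly one 4-cycle through the path `(g, id, h)`. -/
theorem stmt_0 {n : ℕ} (hn : 3 ≤ n) (g h : Equiv.Perm (Fin n))
    (hg : g.IsSwap) (hh : h.IsSwap) (hgh : g ≠ h)
    (hdisj : Disjoint g.support h.support) :
    {w : Equiv.Perm (Fin n) | (CT n).Adj g w ∧ (CT n).Adj h w} = {1, g * h} ∧
    Nat.card {w : Equiv.Perm (Fin n) | w ≠ 1 ∧ (CT n).Adj g w ∧ (CT n).Adj h w} = 1 := by
  have hd : g.Disjoint h := Equiv.Perm.disjoint_iff_disjoint_support.mpr hdisj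
  have hginv : g⁻¹ = g := isSwap_inv_eq hg
  have hhinv : h⁻¹ = h := isSwap_inv_eq hh
  have hgg : g * g = 1 := by have := mul_inv_cancel g; rwa [hginv] at this
  have hcardg : g.support.card = 2 := Equiv.Perm.card_support_eq_two.mpr hg
  have hcardh : h.support.card = 2 := Equiv.Perm.card_support_eq_two.mpr hh
  have hsuppgh : (g * h).support = g.support ∪ h.support := hd.support_mul
  have hcardgh : (g * h).support.card = 4 := by
    rw [hsuppgh, Finset.card_union_eq_card_add_card.mpr hdisj, hcardg, hcardh]
  have hghne1 : g * h ≠ 1 := by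
    intro he
    apply hgh
    have : h = g⁻¹ := by
      rw [eq_inv_iff_mul_eq_one, ← hd.commute.eq]
      exact he
    rw [this, hginv]
  -- key: the set of common neighbors
  have key : {w : Equiv.Perm (Fin n) | (CT n).Adj g w ∧ (CT n).Adj h w} = {1, g * h} := by
    ext w
    simp only [Set.mem_setOf_eq, Set.mem_insert_iff, Set.mem_singleton_iff]
    constructor
    · rintro ⟨ht0, hs0⟩
      obtain ⟨t, htdef⟩ : ∃ t, t = w * g⁻¹ := ⟨_, rfl⟩
      obtain ⟨s, hsdef⟩ : ∃ s, s = w * h⁻¹ := ⟨_, rfl⟩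
      have ht : t.IsSwap := htdef ▸ ht0
      have hs : s.IsSwap := hsdef ▸ hs0
      have hts : t * s = g * h := by
        have h1 : t⁻¹ * s = g * h⁻¹ := by
          rw [htdef, hsdef, mul_inv_rev, inv_inv]
          group
        rw [isSwap_inv_eq ht] at h1
        rw [h1, hhinv]
      have hcardt : t.support.card = 2 := Equiv.Perm.card_support_eq_two.mpr ht
      have hcards : s.support.card = 2 := Equiv.Perm.card_support_eq_two.mpr hs
      have hsub : (g * h).support ⊆ t.support ∪ s.support := by
        rw [← hts]; exact Equiv.Perm.support_mul_le t s
      have hcardle : (t.support ∪ s.support).card ≤ 4 := by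
        calc (t.support ∪ s.support).card ≤ t.support.card + s.support.card :=
              Finset.card_union_le _ _
          _ = 4 := by rw [hcardt, hcards]
      have heq : (g * h).support = t.support ∪ s.support :=
        Finset.eq_of_subset_of_card_le hsub (by rw [hcardgh]; exact hcardle)
      have hdts : Disjoint t.support s.support := by
        rw [← Finset.card_union_eq_card_add_card, ← heq, hcardgh, hcardt, hcards]
      have hne : t.support.Nonempty := by
        rw [← Finset.card_pos, hcardt]; norm_num
      obtain ⟨p, hp⟩ := hne
      have hsp : s p = p := by
        rw [← Equiv.Perm.notMem_support]
        exact Finset.disjoint_left.mp hdts hp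
      have htp : t p = (g * h) p := by
        rw [← hts]
        simp [Equiv.Perm.mul_apply, hsp]
      have hpgh : p ∈ g.support ∪ h.support := by
        rw [← hsuppgh, heq]
        exact Finset.mem_union_left _ hp
      have htgorh : t = g ∨ t = h := by
        rw [Finset.mem_union] at hpgh
        rcases hpgh with hpg | hph
        · left
          have hhp : h p = p := by
            rw [← Equiv.Perm.notMem_support]
            exact Finset.disjoint_left.mp hdisj hpg
          have htpg : t p = g p := by rw [htp, Equiv.Perm.mul_apply, hhp]
          have e1 : Equiv.swap p (t p) = t := swap_eq_of_mem_support ht hp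
          rw [← e1, htpg, swap_eq_of_mem_support hg hpg]
        · right
          have hghp : g (h p) = h p := by
            rw [← Equiv.Perm.notMem_support]
            exact Finset.disjoint_right.mp hdisj (Equiv.Perm.apply_mem_support.mpr hph)
          have htph : t p = h p := by rw [htp, Equiv.Perm.mul_apply, hghp]
          have e1 : Equiv.swap p (t p) = t := swap_eq_of_mem_support ht hp
          rw [← e1, htph, swap_eq_of_mem_support hh hph]
      have hw : w = t * g := by rw [htdef]; group
      rcases htgorh with rfl | rfl
      · left; rw [hw, hgg]
      · right; rw [hw, hd.commute.symm.eq]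
    · rintro (rfl | rfl)
      · constructor
        · show ((1 : Equiv.Perm (Fin n)) * g⁻¹).IsSwap
          rw [one_mul, hginv]; exact hg
        · show ((1 : Equiv.Perm (Fin n)) * h⁻¹).IsSwap
          rw [one_mul, hhinv]; exact hh
      · constructor
        · show (g * h * g⁻¹).IsSwap
          rw [hd.commute.eq, mul_assoc, mul_inv_cancel, mul_one]
          exact hh
        · show (g * h * h⁻¹).IsSwap
          rw [mul_assoc, mul_inv_cancel, mul_one]
          exact hg
  refine ⟨key, ?_⟩
  have key2 : {w : Equiv.Perm (Fin n) | w ≠ 1 ∧ (CT n).Adj g w ∧ (CT n).Adj h w}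
      = {g * h} := by
    ext w
    simp only [Set.mem_setOf_eq, Set.mem_singleton_iff]
    constructor
    · rintro ⟨hw1, hw⟩
      have hmem : w ∈ ({1, g * h} : Set (Equiv.Perm (Fin n))) := by
        rw [← key]; exact hw
      rcases hmem with rfl | hmem
      · exact absurd rfl hw1
      · exact hmem
    · rintro rfl
      refine ⟨hghne1, ?_⟩
      have : g * h ∈ ({1, g * h} : Set (Equiv.Perm (Fin n))) := by right; rfl
      rw [← key] at this
      exact this
  rw [key2]
  simp
end

section
/- Let g and h be distinct transpositions in S_n (n ≥ 3) whose supports intersect in exactly one point (so gh ≠ hg). Then the common neighbors of g and h in the complete transposition graph CT_n are exactly the three elements id, gh, and hg; hence there are exactly two 4-cycles in CT_n passing through the path (g, id, h). -/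
open Equiv Equiv.Perm

/-- A swap moving `x` equals `swap x (u x)`. -/
lemma swap_eq_of_isSwap {α : Type*} [DecidableEq α] {u : Equiv.Perm α} (hu : u.IsSwap)
    {x : α} (hx : u x ≠ x) : u = Equiv.swap x (u x) := by
  obtain ⟨p, q, hpq, rfl⟩ := hu
  rcases eq_or_ne x p with rfl | hxp
  · simp [Equiv.swap_apply_left]
  rcases eq_or_ne x q with rfl | hxq
  · simp [Equiv.swap_apply_right, Equiv.swap_comm]
  · exact absurd (Equiv.swap_apply_of_ne_of_ne hxp hxq) hx

lemma key {α : Type*} [DecidableEq α] {a b d : α} (hab : a ≠ b) (had : a ≠ d) (hbd : b ≠ d)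
    {t : Equiv.Perm α} (ht : t.IsSwap)
    (hts : (t * (Equiv.swap a b * Equiv.swap a d)).IsSwap) :
    t = Equiv.swap a b ∨ t = Equiv.swap a d ∨ t = Equiv.swap b d := by
  set σ := Equiv.swap a b * Equiv.swap a d with hσ
  have hσa : σ a = d := by
    simp [hσ, Equiv.Perm.mul_apply, Equiv.swap_apply_left,
      Equiv.swap_apply_of_ne_of_ne had.symm hbd.symm]
  -- support of t is inside {a, b, d}
  have hsupp : ∀ x : α, t x ≠ x → x = a ∨ x = b ∨ x = d := by
    intro x hx
    by_contra hcon
    push_neg at hcon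
    obtain ⟨hxa, hxb, hxd⟩ := hcon
    have hσx : σ x = x := by
      simp [hσ, Equiv.Perm.mul_apply, Equiv.swap_apply_of_ne_of_ne hxa hxd,
        Equiv.swap_apply_of_ne_of_ne hxa hxb]
    have h1 : (t * σ) x = t x := by simp [Equiv.Perm.mul_apply, hσx]
    have h2 : t * σ = Equiv.swap x (t x) := by
      have := swap_eq_of_isSwap hts (x := x) (by rw [h1]; exact hx)
      rwa [h1] at this
    have h3 : t = Equiv.swap x (t x) := swap_eq_of_isSwap ht hx
    have : σ = 1 := by
      have := h2.trans h3.symm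
      calc σ = t⁻¹ * (t * σ) := by group
        _ = t⁻¹ * t := by rw [this]
        _ = 1 := by group
    rw [this] at hσa
    exact had (by simpa using hσa)
  obtain ⟨p, q, hpq, rfl⟩ := ht
  have hp : p = a ∨ p = b ∨ p = d := hsupp p (by simp [Equiv.swap_apply_left, hpq.symm])
  have hq : q = a ∨ q = b ∨ q = d := hsupp q (by simp [Equiv.swap_apply_right, hpq])
  rcases hp with rfl | rfl | rfl <;> rcases hq with rfl | rfl | rfl <;>
    simp_all [Equiv.swap_comm]

lemma swap_prod_eq {α : Type*} [DecidableEq α] {a b d : α} (hab : a ≠ b) (had : a ≠ d)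
    (hbd : b ≠ d) : Equiv.swap b d * Equiv.swap a b = Equiv.swap a b * Equiv.swap a d := by
  ext x
  simp only [Equiv.Perm.mul_apply, Equiv.swap_apply_def]
  split_ifs <;> simp_all

/-- Common neighbors of two transpositions whose supports meet in exactly one point
are exactly `id`, `g*h` and `h*g`; hence exactly two 4-cycles through `(g, id, h)`. -/
theorem stmt_1 {n : ℕ} (hn : 3 ≤ n) (g h : Equiv.Perm (Fin n))
    (hg : g.IsSwap) (hh : h.IsSwap) (hgh : g ≠ h)
    (hcap : (g.support ∩ h.support).card = 1) :
    {w : Equiv.Perm (Fin n) | (CT n).Adj g w ∧ (CT n).Adj h w} = {1, g * h, h * g} ∧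
    Nat.card {w : Equiv.Perm (Fin n) | w ≠ 1 ∧ (CT n).Adj g w ∧ (CT n).Adj h w} = 2 := by
  -- find the common support point
  obtain ⟨x, hx⟩ : ∃ x, x ∈ g.support ∩ h.support := by
    apply Finset.card_pos.mp; omega
  rw [Finset.mem_inter, Equiv.Perm.mem_support, Equiv.Perm.mem_support] at hx
  obtain ⟨hgx, hhx⟩ := hx
  set b := g x with hb
  set d := h x with hd
  have hgsw : g = Equiv.swap x b := swap_eq_of_isSwap hg hgx
  have hhsw : h = Equiv.swap x d := swap_eq_of_isSwap hh hhx
  have hxb : x ≠ b := hgx.symm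
  have hxd : x ≠ d := hhx.symm
  have hbd : b ≠ d := fun e => hgh (by rw [hgsw, hhsw, e])
  have hginv : g⁻¹ = g := by rw [hgsw, Equiv.swap_inv]
  have hhinv : h⁻¹ = h := by rw [hhsw, Equiv.swap_inv]
  have hgg : g * g = 1 := by rw [hgsw, Equiv.swap_mul_self]
  have hhh : h * h = 1 := by rw [hhsw, Equiv.swap_mul_self]
  have hmain : {w : Equiv.Perm (Fin n) | (CT n).Adj g w ∧ (CT n).Adj h w}
      = {1, g * h, h * g} := by
    ext w
    simp only [Set.mem_setOf_eq, Set.mem_insert_iff, Set.mem_singleton_iff]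
    constructor
    · rintro ⟨h1, h2⟩
      have h1' : (w * g⁻¹).IsSwap := h1
      have h2' : (w * h⁻¹).IsSwap := h2
      rw [hginv] at h1'
      rw [hhinv] at h2'
      have hw : w = (w * g) * g := by rw [mul_assoc, hgg, mul_one]
      have hts : ((w * g) * (Equiv.swap x b * Equiv.swap x d)).IsSwap := by
        rw [← hgsw, ← hhsw, ← mul_assoc, mul_assoc w g g, hgg, mul_one]
        exact h2'
      rcases key hxb hxd hbd h1' hts with ht | ht | ht
      · left; rw [hw, ht, ← hgsw, hgg]
      · right; right; rw [hw, ht, ← hhsw]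
      · right; left
        rw [hw, ht, hgsw, hhsw]
        exact swap_prod_eq hxb hxd hbd
    · rintro (rfl | rfl | rfl)
      · constructor
        · show (1 * g⁻¹).IsSwap; rw [one_mul, hginv]; exact hg
        · show (1 * h⁻¹).IsSwap; rw [one_mul, hhinv]; exact hh
      · constructor
        · show (g * h * g⁻¹).IsSwap
          rw [hhsw, ← Equiv.swap_apply_apply]
          exact ⟨_, _, fun e => hxd (g.injective e), rfl⟩
        · show (g * h * h⁻¹).IsSwap
          rw [mul_assoc, hhinv, hhh, mul_one]; exact hg
      · constructor
        · show (h * g * g⁻¹).IsSwap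
          rw [mul_assoc, hginv, hgg, mul_one]; exact hh
        · show (h * g * h⁻¹).IsSwap
          rw [hgsw, ← Equiv.swap_apply_apply]
          exact ⟨_, _, fun e => hxb (h.injective e), rfl⟩
  refine ⟨hmain, ?_⟩
  have hghx : (g * h) x = d := by
    rw [Equiv.Perm.mul_apply, ← hd, hgsw, Equiv.swap_apply_of_ne_of_ne hxd.symm hbd.symm]
  have hhgx : (h * g) x = b := by
    rw [Equiv.Perm.mul_apply, ← hb, hhsw, Equiv.swap_apply_of_ne_of_ne hxb.symm hbd]
  have hne1 : g * h ≠ 1 := fun e => hxd (by rw [← hghx, e, Equiv.Perm.one_apply])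
  have hne2 : h * g ≠ 1 := fun e => hxb (by rw [← hhgx, e, Equiv.Perm.one_apply])
  have hne3 : g * h ≠ h * g := fun e => hbd (by rw [← hhgx, ← hghx, e])
  have hset : {w : Equiv.Perm (Fin n) | w ≠ 1 ∧ (CT n).Adj g w ∧ (CT n).Adj h w}
      = {g * h, h * g} := by
    ext w
    simp only [Set.mem_setOf_eq, Set.mem_insert_iff, Set.mem_singleton_iff]
    constructor
    · rintro ⟨hw1, hw2⟩
      have : w ∈ ({1, g * h, h * g} : Set (Equiv.Perm (Fin n))) := by rw [← hmain]; exact hw2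
      rcases this with rfl | rfl | rfl
      · exact absurd rfl hw1
      · exact Or.inl rfl
      · exact Or.inr rfl
    · rintro (rfl | rfl)
      · refine ⟨hne1, ?_⟩
        have : g * h ∈ ({1, g * h, h * g} : Set (Equiv.Perm (Fin n))) := by simp
        rw [← hmain] at this; exact this
      · refine ⟨hne2, ?_⟩
        have : h * g ∈ ({1, g * h, h * g} : Set (Equiv.Perm (Fin n))) := by simp
        rw [← hmain] at this; exact this
  rw [hset, Nat.card_coe_set_eq, Set.ncard_pair hne3]
end

section
/- Let (u, x, z) be a 2-path in CT_n (n ≥ 3), i.e., u and z are distinct neighbors of x. If the transpositions u·x⁻¹ and z·x⁻¹ have disjoint supports, then the unique common neighbor of u and z other than x is z·x⁻¹·u; in particular there is a unique 4-cycle in CT_n containing the path (u, x, z). -/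
open Equiv Equiv.Perm

lemma isSwap_inv_eq_s9 {α : Type*} [DecidableEq α] {f : Equiv.Perm α} (h : f.IsSwap) :
    f⁻¹ = f := by
  obtain ⟨a, b, hab, rfl⟩ := h
  exact Equiv.swap_inv a b

lemma swap_eq_of_apply {α : Type*} [DecidableEq α] {a b c d : α} (hab : a ≠ b) (hcd : c ≠ d)
    (h : Equiv.swap a b c = d) : Equiv.swap a b = Equiv.swap c d := by
  rcases eq_or_ne c a with rfl | hca
  · rw [Equiv.swap_apply_left] at h; subst h; rfl
  rcases eq_or_ne c b with rfl | hcb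
  · rw [Equiv.swap_apply_right] at h; subst h; exact Equiv.swap_comm _ _
  · rw [Equiv.swap_apply_of_ne_of_ne hca hcb] at h; exact absurd h hcd

lemma key_s9 {n : ℕ} {α β σ τ : Equiv.Perm (Fin n)} (hα : α.IsSwap) (hβ : β.IsSwap)
    (hσ : σ.IsSwap) (hτ : τ.IsSwap) (hd : Disjoint σ.support τ.support)
    (h : α * β = σ * τ) : (α = σ ∧ β = τ) ∨ (α = τ ∧ β = σ) := by
  have hdστ : Equiv.Perm.Disjoint σ τ := disjoint_iff_disjoint_support.2 hd
  have hcσ : σ.support.card = 2 := card_support_eq_two.2 hσ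
  have hcτ : τ.support.card = 2 := card_support_eq_two.2 hτ
  have hcα : α.support.card = 2 := card_support_eq_two.2 hα
  have hcβ : β.support.card = 2 := card_support_eq_two.2 hβ
  have hsupστ : (σ * τ).support = σ.support ∪ τ.support := hdστ.support_mul
  have hc4 : (σ * τ).support.card = 4 := by
    rw [hsupστ, Finset.card_union_of_disjoint hd, hcσ, hcτ]
  -- α and β have disjoint supports
  have hsub : (σ * τ).support ⊆ α.support ∪ β.support := by
    rw [← h]; exact support_mul_le α β
  have hdab : Disjoint α.support β.support := by
    have h1 : 4 ≤ (α.support ∪ β.support).card := hc4 ▸ Finset.card_le_card hsub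
    have h2 := Finset.card_union_add_card_inter α.support β.support
    rw [hcα, hcβ] at h2
    have : (α.support ∩ β.support).card = 0 := by omega
    rw [Finset.card_eq_zero] at this
    exact Finset.disjoint_iff_inter_eq_empty.2 this
  have hdαβ : Equiv.Perm.Disjoint α β := disjoint_iff_disjoint_support.2 hdab
  obtain ⟨c, d, hcd, rfl⟩ := hσ
  obtain ⟨a, b, hab, rfl⟩ := hα
  obtain ⟨p, q, hpq, rfl⟩ := hβ
  have hcmem : c ∈ (Equiv.swap c d).support := by
    simp [Equiv.Perm.support_swap hcd]
  have hcτ' : τ c = c := by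
    rw [← notMem_support]
    exact fun hc => (Finset.disjoint_left.1 hd hcmem) hc
  have happ : (Equiv.swap a b * Equiv.swap p q) c = d := by
    rw [h]; simp [Equiv.Perm.mul_apply, hcτ', Equiv.swap_apply_left]
  have hcmem' : c ∈ (Equiv.swap a b).support ∪ (Equiv.swap p q).support := by
    apply hsub
    rw [hsupστ]
    exact Finset.mem_union_left _ hcmem
  rcases Finset.mem_union.1 hcmem' with hca | hcb
  · -- c in support of α; then β fixes c, α c = d, α = σ
    have hβc : Equiv.swap p q c = c := by
      rw [← notMem_support]
      exact fun hc => (Finset.disjoint_left.1 hdab hca) hc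
    have hαc : Equiv.swap a b c = d := by
      rw [← happ]; simp [Equiv.Perm.mul_apply, hβc]
    have hασ := swap_eq_of_apply hab hcd hαc
    left
    refine ⟨hασ, ?_⟩
    rw [hασ] at h
    exact mul_left_cancel h
  · -- c in support of β; β c ∈ supp β, fixed by α, so β c = d, β = σ, α = τ
    have hβc : Equiv.swap p q c ∈ (Equiv.swap p q).support := apply_mem_support.2 hcb
    have hαβc : Equiv.swap a b (Equiv.swap p q c) = Equiv.swap p q c := by
      rw [← notMem_support]
      exact fun hc => (Finset.disjoint_right.1 hdab hβc) hc
    have hβc' : Equiv.swap p q c = d := by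
      rw [← happ]; simp [Equiv.Perm.mul_apply, hαβc]
    have hβσ := swap_eq_of_apply hpq hcd hβc'
    right
    refine ⟨?_, hβσ⟩
    rw [hβσ] at h
    have hcomm : Equiv.swap a b * Equiv.swap c d = Equiv.swap c d * Equiv.swap a b := by
      have := hdαβ
      rw [hβσ] at this
      exact this.commute.eq
    rw [hcomm] at h
    exact mul_left_cancel h

private theorem stmt_9_aux {n : ℕ} (hn : 3 ≤ n) (u x z : Equiv.Perm (Fin n))
    (hxu : ((u * x⁻¹).IsSwap)) (hxz : ((z * x⁻¹).IsSwap)) (huz : u ≠ z)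
    (hdisj : Disjoint (u * x⁻¹).support (z * x⁻¹).support) :
    {w : Equiv.Perm (Fin n) | (w * u⁻¹).IsSwap ∧ (w * z⁻¹).IsSwap ∧ w ≠ x} = {z * x⁻¹ * u} := by
  have hτinv : (z * x⁻¹)⁻¹ = z * x⁻¹ := isSwap_inv_eq_s9 hxz
  have hσinv : (u * x⁻¹)⁻¹ = u * x⁻¹ := isSwap_inv_eq_s9 hxu
  ext w
  simp only [Set.mem_setOf_eq, Set.mem_singleton_iff]
  constructor
  · rintro ⟨hu, hz, hwx⟩
    have hαinv : (w * u⁻¹)⁻¹ = w * u⁻¹ := isSwap_inv_eq_s9 hu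
    have hprod : (w * u⁻¹) * (w * z⁻¹) = (u * x⁻¹) * (z * x⁻¹) := by
      calc (w * u⁻¹) * (w * z⁻¹) = (w * u⁻¹)⁻¹ * (w * z⁻¹) := by rw [hαinv]
        _ = (u * x⁻¹) * (z * x⁻¹)⁻¹ := by group
        _ = (u * x⁻¹) * (z * x⁻¹) := by rw [hτinv]
    rcases key_s9 hu hz hxu hxz hdisj hprod with ⟨h1, _⟩ | ⟨h1, _⟩
    · exfalso
      apply hwx
      have : w * u⁻¹ * (u * x⁻¹) = 1 := by
        rw [h1]
        nth_rewrite 2 [← hσinv]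
        rw [mul_inv_cancel]
      have hx : w = x := by
        have := congrArg (· * x) this
        simpa [mul_assoc] using this
      exact hx
    · have := congrArg (· * u) h1
      simpa [mul_assoc] using this
  · rintro rfl
    refine ⟨?_, ?_, ?_⟩
    · simpa [mul_assoc] using hxz
    · have : z * x⁻¹ * u * z⁻¹ = (z * x⁻¹) * (u * x⁻¹) * (z * x⁻¹)⁻¹ := by group
      rw [this]
      obtain ⟨a, b, hab, hab'⟩ := hxu
      rw [hab', ← Equiv.swap_apply_apply]
      exact ⟨_, _, fun hh => hab ((z * x⁻¹).injective hh), rfl⟩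
    · intro hc
      have h1 : (z * x⁻¹) * (u * x⁻¹) = 1 := by
        have := congrArg (· * x⁻¹) hc
        calc (z * x⁻¹) * (u * x⁻¹) = (z * x⁻¹ * u) * x⁻¹ := by group
          _ = x * x⁻¹ := by rw [hc]
          _ = 1 := mul_inv_cancel x
      have h2 : z * x⁻¹ = (u * x⁻¹)⁻¹ := eq_inv_of_mul_eq_one_left h1
      rw [hσinv] at h2
      rw [h2] at hdisj
      have h3 : (u * x⁻¹).support = ∅ := by
        simpa using disjoint_self.1 hdisj
      have h4 := Equiv.Perm.card_support_eq_two.2 hxu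
      rw [h3] at h4
      simp at h4


/-- If `(u, x, z)` is a 2-path in `CT n` and the transpositions `u*x⁻¹`, `z*x⁻¹`
have disjoint supports, then the unique common neighbor of `u` and `z` other than
`x` is `z*x⁻¹*u`; hence a unique 4-cycle contains the path `(u,x,z)`. -/
theorem stmt_9 {n : ℕ} (hn : 3 ≤ n) (u x z : Equiv.Perm (Fin n))
    (hxu : (CT n).Adj x u) (hxz : (CT n).Adj x z) (huz : u ≠ z)
    (hdisj : Disjoint (u * x⁻¹).support (z * x⁻¹).support) :
    {w : Equiv.Perm (Fin n) | (CT n).Adj u w ∧ (CT n).Adj z w ∧ w ≠ x} = {z * x⁻¹ * u} := by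
  exact stmt_9_aux hn u x z hxu hxz huz hdisj
end

section
/- Let (u, x, z) be a 2-path in CT_n (n ≥ 3) such that the supports of the transpositions u·x⁻¹ and z·x⁻¹ intersect in exactly one point. Then the common neighbors of u and z in CT_n are exactly x, z·x⁻¹·u, and u·x⁻¹·z, and the latter two are distinct; hence exactly two 4-cycles of CT_n contain the path (u, x, z). -/
open Equiv Equiv.Perm


lemma swap_eq_of_moves {α : Type*} [DecidableEq α] {τ : Equiv.Perm α} (h : τ.IsSwap) {p : α}
    (hp : τ p ≠ p) : τ = Equiv.swap p (τ p) := by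
  obtain ⟨r, m, hrm, rfl⟩ := h
  rcases (Equiv.swap_apply_ne_self_iff.mp hp).2 with rfl | rfl
  · rw [Equiv.swap_apply_left]
  · rw [Equiv.swap_apply_right, Equiv.swap_comm]

lemma moved_of_mul {α : Type*} [DecidableEq α] {σ τ : Equiv.Perm α} (hσ : σ.IsSwap)
    (hτ : τ.IsSwap) (hne : σ * τ ≠ 1) {p : α} (hp : σ p ≠ p) : (σ * τ) p ≠ p := by
  intro h
  have hσinv : σ⁻¹ = σ := by
    obtain ⟨r, m, hrm, rfl⟩ := hσ
    exact Equiv.swap_inv r m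
  have hτp : τ p = σ p := by
    have : σ (τ p) = p := h
    calc τ p = σ⁻¹ (σ (τ p)) := by simp
    _ = σ p := by rw [this, hσinv]
  have hτp' : τ p ≠ p := by rw [hτp]; exact hp
  have h1 : σ = Equiv.swap p (σ p) := swap_eq_of_moves hσ hp
  have h2 : τ = Equiv.swap p (σ p) := by rw [swap_eq_of_moves hτ hτp', hτp]
  apply hne
  rw [h1, h2, Equiv.swap_mul_self]

/-- If `(u, x, z)` is a 2-path in `CT n` and the supports of `u*x⁻¹`, `z*x⁻¹` meet
in exactly one point, then the common neighbors of `u` and `z` are exactly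
`x`, `z*x⁻¹*u` and `u*x⁻¹*z`, the latter two being distinct; hence exactly two
4-cycles of `CT n` contain the path `(u, x, z)`. -/
theorem stmt_10 {n : ℕ} (hn : 3 ≤ n) (u x z : Equiv.Perm (Fin n))
    (hxu : (CT n).Adj x u) (hxz : (CT n).Adj x z) (huz : u ≠ z)
    (hcap : ((u * x⁻¹).support ∩ (z * x⁻¹).support).card = 1) :
    {w : Equiv.Perm (Fin n) | (CT n).Adj u w ∧ (CT n).Adj z w} = {x, z * x⁻¹ * u, u * x⁻¹ * z} ∧
    z * x⁻¹ * u ≠ u * x⁻¹ * z := by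
  have hxu' : (u * x⁻¹).IsSwap := hxu
  have hxz' : (z * x⁻¹).IsSwap := hxz
  obtain ⟨p, q, hpq, hs⟩ := hxu'
  obtain ⟨r, m, hrm, ht⟩ := hxz'
  -- find the common point a of the two supports
  have hone : ∃ a, ({p, q} ∩ ({r, m} : Finset (Fin n))) = {a} := by
    rw [hs, ht, Equiv.Perm.support_swap hpq, Equiv.Perm.support_swap hrm] at hcap
    exact Finset.card_eq_one.mp hcap
  obtain ⟨a, ha⟩ := hone
  have hamem : a ∈ ({p, q} ∩ ({r, m} : Finset (Fin n))) := by rw [ha]; simp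
  have ha1 : a = p ∨ a = q := by
    have := (Finset.mem_inter.mp hamem).1; simpa using this
  have ha2 : a = r ∨ a = m := by
    have := (Finset.mem_inter.mp hamem).2; simpa using this
  have hb : ∃ b, b ≠ a ∧ u * x⁻¹ = Equiv.swap a b := by
    rcases ha1 with rfl | rfl
    · exact ⟨q, Ne.symm hpq, hs⟩
    · exact ⟨p, hpq, by rw [hs, Equiv.swap_comm]⟩
  have hc : ∃ c, c ≠ a ∧ z * x⁻¹ = Equiv.swap a c := by
    rcases ha2 with rfl | rfl
    · exact ⟨m, Ne.symm hrm, ht⟩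
    · exact ⟨r, hrm, by rw [ht, Equiv.swap_comm]⟩
  obtain ⟨b, hba, hsab⟩ := hb
  obtain ⟨c, hca, htac⟩ := hc
  have hab : a ≠ b := hba.symm
  have hac : a ≠ c := hca.symm
  have hbc : b ≠ c := by
    rintro rfl
    rw [hsab, htac, Equiv.Perm.support_swap hab, Finset.inter_self] at hcap
    have : ({a, b} : Finset (Fin n)).card = 2 := Finset.card_pair hab
    omega
  have hu : u = Equiv.swap a b * x := by
    rw [← hsab]; group
  have hz : z = Equiv.swap a c * x := by
    rw [← htac]; group
  constructor
  · ext w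
    simp only [Set.mem_setOf_eq, Set.mem_insert_iff, Set.mem_singleton_iff]
    constructor
    · rintro ⟨h1, h2⟩
      replace h1 : (w * u⁻¹).IsSwap := h1
      replace h2 : (w * z⁻¹).IsSwap := h2
      have hσ : (u * w⁻¹).IsSwap := by
        obtain ⟨i, j, hij, hij2⟩ := h1
        refine ⟨i, j, hij, ?_⟩
        rw [← Equiv.swap_inv, ← hij2, mul_inv_rev, inv_inv]
      have hρ : (u * w⁻¹) * (w * z⁻¹) = Equiv.swap a b * Equiv.swap a c := by
        have e : (u * w⁻¹) * (w * z⁻¹) = u * z⁻¹ := by group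
        rw [e, hu, hz, mul_inv_rev, Equiv.swap_inv]
        simp [mul_assoc]
      have hρa : (Equiv.swap a b * Equiv.swap a c) a = c := by
        simp [Equiv.Perm.mul_apply, Equiv.swap_apply_of_ne_of_ne hca hbc.symm]
      have hρne : Equiv.swap a b * Equiv.swap a c ≠ 1 := by
        intro h
        rw [h] at hρa
        exact hca (by simpa using hρa.symm)
      have hfix : ∀ y : Fin n, y ≠ a → y ≠ b → y ≠ c →
          (Equiv.swap a b * Equiv.swap a c) y = y := by
        intro y h1' h2' h3'
        simp [Equiv.Perm.mul_apply, Equiv.swap_apply_of_ne_of_ne, h1', h2', h3']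
      obtain ⟨i, j, hij, hσswap⟩ := hσ
      have hσswap' : (Equiv.swap i j).IsSwap := ⟨i, j, hij, rfl⟩
      have hmem : ∀ y : Fin n, Equiv.swap i j y ≠ y → (y = a ∨ y = b ∨ y = c) := by
        intro y hy
        by_contra hcon
        push_neg at hcon
        have : (u * w⁻¹) * (w * z⁻¹) ≠ 1 := by rw [hρ]; exact hρne
        have hmoved := moved_of_mul (σ := u * w⁻¹) (τ := w * z⁻¹)
          ⟨i, j, hij, hσswap⟩ h2 this (p := y) (by rw [hσswap]; exact hy)
        rw [hρ] at hmoved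
        exact hmoved (hfix y hcon.1 hcon.2.1 hcon.2.2)
      have hi : i = a ∨ i = b ∨ i = c := hmem i (by rw [Equiv.swap_apply_left]; exact hij.symm)
      have hj : j = a ∨ j = b ∨ j = c := hmem j (by rw [Equiv.swap_apply_right]; exact hij)
      have hw : w = Equiv.swap i j * u := by
        have : w = (Equiv.swap i j)⁻¹ * u := by rw [← hσswap]; group
        rwa [Equiv.swap_inv] at this
      -- useful rewrites for targets
      have hxw : x = Equiv.swap a b * u := by rw [hu, ← mul_assoc, Equiv.swap_mul_self, one_mul]
      have hzxu : z * x⁻¹ * u = Equiv.swap a c * u := by rw [htac]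
      have huxz : u * x⁻¹ * z = Equiv.swap b c * u := by
        rw [hsab, hz, hu]
        have key : Equiv.swap a b * (Equiv.swap a c * x) =
            Equiv.swap b c * (Equiv.swap a b * x) := by
          rw [← mul_assoc, ← mul_assoc]
          congr 1
          have := Equiv.swap_apply_apply (Equiv.swap a b) a c
          rw [Equiv.swap_apply_left, Equiv.swap_apply_of_ne_of_ne hca hbc.symm,
            Equiv.swap_inv] at this
          rw [this, mul_assoc, Equiv.swap_mul_self, mul_one]
        rw [key]
      rcases hi with rfl | rfl | rfl <;> rcases hj with rfl | rfl | rfl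
      · exact absurd rfl hij
      · left; rw [hw, hxw]
      · right; left; rw [hw, hzxu]
      · left; rw [hw, hxw, Equiv.swap_comm]
      · exact absurd rfl hij
      · right; right; rw [hw, huxz]
      · right; left; rw [hw, hzxu, Equiv.swap_comm]
      · right; right; rw [hw, huxz, Equiv.swap_comm]
      · exact absurd rfl hij
    · have hswap_bc : (Equiv.swap b c : Equiv.Perm (Fin n)).IsSwap := ⟨b, c, hbc, rfl⟩
      rintro (h | h | h) <;> rw [h]
      · constructor
        · show (x * u⁻¹).IsSwap
          refine ⟨a, b, hab, ?_⟩
          rw [hu]; simp [mul_inv_rev, Equiv.swap_inv, ← mul_assoc]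
        · show (x * z⁻¹).IsSwap
          refine ⟨a, c, hac, ?_⟩
          rw [hz]; simp [mul_inv_rev, Equiv.swap_inv, ← mul_assoc]
      · constructor
        · show (z * x⁻¹ * u * u⁻¹).IsSwap
          refine ⟨a, c, hac, ?_⟩
          rw [htac]; group
        · show (z * x⁻¹ * u * z⁻¹).IsSwap
          refine ⟨c, b, hbc.symm, ?_⟩
          rw [htac, hu, hz]
          have := Equiv.swap_apply_apply (Equiv.swap a c) a b
          rw [Equiv.swap_apply_left, Equiv.swap_apply_of_ne_of_ne hba hbc, Equiv.swap_inv] at this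
          rw [this]
          simp [mul_assoc, mul_inv_rev, Equiv.swap_inv]
      · constructor
        · show (u * x⁻¹ * z * u⁻¹).IsSwap
          refine ⟨b, c, hbc, ?_⟩
          rw [hsab, hz, hu]
          have := Equiv.swap_apply_apply (Equiv.swap a b) a c
          rw [Equiv.swap_apply_left, Equiv.swap_apply_of_ne_of_ne hca hbc.symm,
            Equiv.swap_inv] at this
          rw [this]
          simp [mul_assoc, mul_inv_rev, Equiv.swap_inv]
        · show (u * x⁻¹ * z * z⁻¹).IsSwap
          refine ⟨a, b, hab, ?_⟩
          rw [hsab]; group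
  · intro h
    rw [htac, hsab, hu, hz] at h
    have := congrArg (fun f => f (x⁻¹ b)) h
    simp only [Equiv.Perm.mul_apply, Equiv.Perm.inv_def, Equiv.apply_symm_apply] at this
    rw [Equiv.swap_apply_right, Equiv.swap_apply_left,
      Equiv.swap_apply_of_ne_of_ne hba hbc, Equiv.swap_apply_right] at this
    exact hca this
end

section
/- For any cycle C = (u_0, u_1, ..., u_{2l} = u_0) of length 2l (l ≥ 2) in CT_n, the support of C, defined as the union over all edges {u_{i-1}, u_i} of the support of the transposition u_i·u_{i-1}⁻¹, has cardinality at most 2l. -/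
/-- Partial products of a sequence of permutations. -/
def walkProd {n : ℕ} (t : ℕ → Equiv.Perm (Fin n)) : ℕ → Equiv.Perm (Fin n)
  | 0 => 1
  | m + 1 => t m * walkProd t m

lemma walkProd_fix {n : ℕ} (t : ℕ → Equiv.Perm (Fin n)) (a : Fin n) :
    ∀ m, (∀ i < m, t i a = a) → walkProd t m a = a := by
  intro m
  induction m with
  | zero => intro _; rfl
  | succ m ih =>
    intro h
    simp only [walkProd, Equiv.Perm.mul_apply]
    rw [ih (fun i hi => h i (hi.trans (Nat.lt_succ_self m))), h m (Nat.lt_succ_self m)]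

lemma walkProd_ne {n : ℕ} (t : ℕ → Equiv.Perm (Fin n)) (a : Fin n) (j : ℕ)
    (hja : t j a ≠ a) :
    ∀ m, j < m → (∀ i < m, i ≠ j → t i a = a) → walkProd t m a ≠ a := by
  intro m
  induction m with
  | zero => intro h; exact absurd h (Nat.not_lt_zero j)
  | succ m ih =>
    intro hjm h
    rcases Nat.lt_succ_iff_lt_or_eq.mp hjm with hj | rfl
    · -- j < m
      have hm : t m a = a := h m (Nat.lt_succ_self m) (by omega)
      have hP : walkProd t m a ≠ a :=
        ih hj (fun i hi hij => h i (hi.trans (Nat.lt_succ_self m)) hij)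
      simp only [walkProd, Equiv.Perm.mul_apply]
      intro heq
      exact hP ((t m).injective (heq.trans hm.symm))
    · -- j = m
      have hP : walkProd t j a = a :=
        walkProd_fix t a j (fun i hi => h i (hi.trans (Nat.lt_succ_self j)) (by omega))
      simp only [walkProd, Equiv.Perm.mul_apply, hP]
      exact hja

/-- The support of a `2l`-cycle `(u 0, u 1, …, u (2l) = u 0)` in `CT n` has at most
`2l` elements. -/
theorem stmt_11 {n l : ℕ} (hl : 2 ≤ l) (u : ℕ → Equiv.Perm (Fin n))
    (hadj : ∀ i < 2 * l, (CT n).Adj (u i) (u (i + 1)))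
    (hclosed : u (2 * l) = u 0)
    (hinj : ∀ i j, i < 2 * l → j < 2 * l → u i = u j → i = j) :
    ((Finset.range (2 * l)).biUnion (fun i => (u (i + 1) * (u i)⁻¹).support)).card ≤ 2 * l := by
  set t : ℕ → Equiv.Perm (Fin n) := fun i => u (i + 1) * (u i)⁻¹ with ht
  set S := (Finset.range (2 * l)).biUnion (fun i => (t i).support) with hS
  -- telescoping product
  have htel : ∀ m, walkProd t m = u m * (u 0)⁻¹ := by
    intro m
    induction m with
    | zero => simp [walkProd]
    | succ m ih =>
      simp only [walkProd, ih]
      simp only [ht]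
      group
  have hprod : walkProd t (2 * l) = 1 := by
    rw [htel, hclosed, mul_inv_cancel]
  -- every point of S is moved by at least two of the transpositions
  have htwice : ∀ a ∈ S, 2 ≤ ((Finset.range (2 * l)).filter
      (fun i => a ∈ (t i).support)).card := by
    intro a ha
    by_contra hcon
    push_neg at hcon
    obtain ⟨j, hj, hja⟩ := Finset.mem_biUnion.mp ha
    have hjf : j ∈ (Finset.range (2 * l)).filter (fun i => a ∈ (t i).support) :=
      Finset.mem_filter.mpr ⟨hj, hja⟩
    have hcard1 : ((Finset.range (2 * l)).filter (fun i => a ∈ (t i).support)).card = 1 := by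
      have := Finset.card_pos.mpr ⟨j, hjf⟩
      omega
    obtain ⟨x, hx⟩ := Finset.card_eq_one.mp hcard1
    have hjx : j = x := by
      have := hx ▸ hjf
      simpa using this
    have hfix : ∀ i < 2 * l, i ≠ j → t i a = a := by
      intro i hi hij
      by_contra hmove
      have : i ∈ (Finset.range (2 * l)).filter (fun i => a ∈ (t i).support) :=
        Finset.mem_filter.mpr ⟨Finset.mem_range.mpr hi, Equiv.Perm.mem_support.mpr hmove⟩
      rw [hx] at this
      exact hij (by simpa [← hjx] using this)
    have hja' : t j a ≠ a := Equiv.Perm.mem_support.mp hja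
    have hjlt : j < 2 * l := Finset.mem_range.mp hj
    exact walkProd_ne t a j hja' (2 * l) hjlt hfix (by rw [hprod]; rfl)
  -- double counting
  have hswap : ∑ a ∈ S, ((Finset.range (2 * l)).filter (fun i => a ∈ (t i).support)).card
      = ∑ i ∈ Finset.range (2 * l), (S.filter (fun a => a ∈ (t i).support)).card := by
    simp only [Finset.card_filter]
    exact Finset.sum_comm
  have hfull : ∀ i ∈ Finset.range (2 * l),
      (S.filter (fun a => a ∈ (t i).support)).card = 2 := by
    intro i hi
    have hsub : (t i).support ⊆ S := by
      rw [hS]; exact Finset.subset_biUnion_of_mem (fun i => (t i).support) hi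
    have : S.filter (fun a => a ∈ (t i).support) = (t i).support := by
      ext a
      simp only [Finset.mem_filter]
      exact ⟨fun h => h.2, fun h => ⟨hsub h, h⟩⟩
    rw [this]
    exact Equiv.Perm.card_support_eq_two.mpr (hadj i (Finset.mem_range.mp hi))
  have hsum : ∑ a ∈ S, ((Finset.range (2 * l)).filter (fun i => a ∈ (t i).support)).card
      = 2 * (2 * l) := by
    rw [hswap, Finset.sum_congr rfl hfull, Finset.sum_const, Finset.card_range]
    ring
  have hle : S.card * 2 ≤ 2 * (2 * l) := by
    calc S.card * 2 = S.card • 2 := (smul_eq_mul _ _).symm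
    _ ≤ ∑ a ∈ S, ((Finset.range (2 * l)).filter (fun i => a ∈ (t i).support)).card :=
        Finset.card_nsmul_le_sum S _ 2 htwice
    _ = 2 * (2 * l) := hsum
  omega
end

section
/- Let w_1, ..., w_{2l} be transpositions in S_n with w_{2l}·w_{2l-1}·...·w_1 = id. Then every point in the union of the supports of the w_i lies in the support of at least two of the w_i; consequently the union of the supports has cardinality at most 2l. -/
lemma fix_prod {n : ℕ} (x : Fin n) :
    ∀ (L : List (Equiv.Perm (Fin n))), (∀ p ∈ L, p x = x) → L.prod x = x := by
  intro L h
  induction L with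
  | nil => simp
  | cons a t ih =>
    have := h a List.mem_cons_self
    simp only [List.prod_cons, Equiv.Perm.mul_apply]
    rw [ih (fun p hp => h p (List.mem_cons_of_mem a hp)), this]

theorem stmt_12 {n l : ℕ} (w : Fin (2 * l) → Equiv.Perm (Fin n))
    (hw : ∀ i, (w i).IsSwap)
    (hprod : (List.ofFn w).prod = 1) :
    (∀ x : Fin n, x ∈ Finset.univ.biUnion (fun i => (w i).support) →
      ∃ i j, i ≠ j ∧ x ∈ (w i).support ∧ x ∈ (w j).support) ∧
    (Finset.univ.biUnion (fun i => (w i).support)).card ≤ 2 * l := by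
  set L := List.ofFn w with hLdef
  have hLlen : L.length = 2 * l := by simp [hLdef]
  have key : ∀ x : Fin n, x ∈ Finset.univ.biUnion (fun i => (w i).support) →
      ∃ i j, i ≠ j ∧ x ∈ (w i).support ∧ x ∈ (w j).support := by
    intro x hx
    obtain ⟨i, -, hi⟩ := Finset.mem_biUnion.mp hx
    by_contra h
    push_neg at h
    have hfix : ∀ j, j ≠ i → w j x = x := by
      intro j hj
      by_contra hjx
      exact h j i hj (Equiv.Perm.mem_support.mpr hjx) hi
    have hiL : (i : ℕ) < L.length := by rw [hLlen]; exact i.isLt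
    have hsplit : L = L.take (i : ℕ) ++ L[(i : ℕ)] :: L.drop ((i : ℕ) + 1) := by
      conv_lhs => rw [← List.take_append_drop (i : ℕ) L]
      rw [List.drop_eq_getElem_cons hiL]
    have hgi : L[(i : ℕ)] = w i := by
      simp [hLdef]
    have hd : (L.drop ((i : ℕ) + 1)).prod x = x := by
      apply fix_prod
      intro p hp
      obtain ⟨k, hk, hpk⟩ := List.mem_iff_getElem.mp hp
      rw [List.getElem_drop] at hpk
      have hlt : (i : ℕ) + 1 + k < 2 * l := by
        have := hk; rw [List.length_drop, hLlen] at this; omega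
      have : p = w ⟨(i : ℕ) + 1 + k, hlt⟩ := by
        rw [← hpk]; simp [hLdef]
      rw [this]
      apply hfix
      intro hcontra
      have := congrArg Fin.val hcontra
      simp at this
      omega
    have ht : ∀ p ∈ L.take (i : ℕ), p x = x := by
      intro p hp
      obtain ⟨k, hk, hpk⟩ := List.mem_iff_getElem.mp hp
      rw [List.getElem_take] at hpk
      have hki : k < (i : ℕ) := by
        have := hk; rw [List.length_take] at this; omega
      have hlt : k < 2 * l := by omega
      have : p = w ⟨k, hlt⟩ := by rw [← hpk]; simp [hLdef]
      rw [this]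
      apply hfix
      intro hcontra
      have := congrArg Fin.val hcontra
      simp at this
      omega
    have hprodx : L.prod x = x := by rw [hprod]; rfl
    rw [hsplit, List.prod_append, List.prod_cons, hgi] at hprodx
    simp only [Equiv.Perm.mul_apply, hd] at hprodx
    have htx : (L.take (i : ℕ)).prod x = x := fix_prod x _ ht
    have : w i x = x := (L.take (i : ℕ)).prod.injective (by rw [hprodx, htx])
    exact Equiv.Perm.mem_support.mp hi this
  refine ⟨key, ?_⟩
  set U := Finset.univ.biUnion (fun i => (w i).support) with hU
  have h2 : ∀ x ∈ U, 2 ≤ (Finset.univ.filter (fun i => x ∈ (w i).support)).card := by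
    intro x hx
    obtain ⟨i, j, hij, hi, hj⟩ := key x hx
    exact Finset.one_lt_card.mpr ⟨i, Finset.mem_filter.mpr ⟨Finset.mem_univ _, hi⟩,
      j, Finset.mem_filter.mpr ⟨Finset.mem_univ _, hj⟩, hij⟩
  have hsum : ∑ x ∈ U, (Finset.univ.filter (fun i => x ∈ (w i).support)).card
      = ∑ i : Fin (2 * l), ((w i).support).card := by
    simp only [Finset.card_filter]
    rw [Finset.sum_comm]
    congr 1
    ext i
    rw [← Finset.card_filter]
    congr 1
    rw [Finset.filter_mem_eq_inter, Finset.inter_eq_right]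
    intro y hy
    exact Finset.mem_biUnion.mpr ⟨i, Finset.mem_univ _, hy⟩
  have hcard : ∀ i, ((w i).support).card = 2 :=
    fun i => Equiv.Perm.card_support_eq_two.mpr (hw i)
  have hle : 2 * U.card ≤ 2 * (2 * l) := by
    calc 2 * U.card = ∑ _x ∈ U, 2 := by
          rw [Finset.sum_const, smul_eq_mul, mul_comm]
      _ ≤ ∑ x ∈ U, (Finset.univ.filter (fun i => x ∈ (w i).support)).card :=
          Finset.sum_le_sum h2
      _ = ∑ i : Fin (2 * l), ((w i).support).card := hsum
      _ = 2 * (2 * l) := by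
          simp [hcard, Finset.sum_const, Finset.card_univ, mul_comm]
  omega
end

section
/- Let G be a C_{4a+4b-2}-free subgraph of CT_n, and let C and C' be cycles in G of lengths 4a and 4b respectively (a, b ≥ 2) sharing at least one common edge. Then |supp(C) ∩ supp(C')| ≥ 3, where supp of a cycle is the union of the supports of the transpositions corresponding to its edges. -/
/-- The support of an edge `{u, z}` of `CT n`: the set of moved points of the
transposition `z * u⁻¹`. -/
def edgeSupport {n : ℕ} (e : Sym2 (Equiv.Perm (Fin n))) : Finset (Fin n) :=
  Sym2.lift ⟨fun u z => (z * u⁻¹).support, by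
    intro u z
    show (z * u⁻¹).support = (u * z⁻¹).support
    conv_rhs => rw [← Equiv.Perm.support_inv]
    rw [mul_inv_rev, inv_inv]⟩ e

/-- The support of a walk: the union of the supports of its edges. -/
def walkSupport {n : ℕ} {G : SimpleGraph (Equiv.Perm (Fin n))} {x y : Equiv.Perm (Fin n)}
    (c : G.Walk x y) : Finset (Fin n) :=
  (c.edges.map edgeSupport).foldr (· ∪ ·) ∅

open SimpleGraph

section Aux

variable {n : ℕ} {G : SimpleGraph (Equiv.Perm (Fin n))}

lemma mem_foldr_union {α β : Type*} [DecidableEq β] (f : α → Finset β) (l : List α) (i : β) :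
    i ∈ (l.map f).foldr (· ∪ ·) ∅ ↔ ∃ e ∈ l, i ∈ f e := by
  induction l with
  | nil => simp
  | cons x xs ih => simp [ih]

lemma mem_walkSupport {x y : Equiv.Perm (Fin n)} (c : G.Walk x y) (i : Fin n) :
    i ∈ walkSupport c ↔ ∃ e ∈ c.edges, i ∈ edgeSupport e :=
  mem_foldr_union _ _ _

lemma walkSupport_subset_of_edges {x y x' y' : Equiv.Perm (Fin n)} {p : G.Walk x y}
    {q : G.Walk x' y'} (h : ∀ e ∈ p.edges, e ∈ q.edges) :
    walkSupport p ⊆ walkSupport q := by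
  intro i hi
  rw [mem_walkSupport] at hi ⊢
  obtain ⟨e, he, hie⟩ := hi
  exact ⟨e, h e he, hie⟩

/-- Lemma B : the support of `y * x⁻¹` is contained in the walk support. -/
lemma support_end_mul_inv_start {x y : Equiv.Perm (Fin n)} (p : G.Walk x y) :
    (y * x⁻¹).support ⊆ walkSupport p := by
  induction p with
  | nil => simp
  | @cons x x' y h q ih =>
      have key : y * x⁻¹ = (y * x'⁻¹) * (x' * x⁻¹) := by group
      rw [key]
      intro i hi
      have := Equiv.Perm.support_mul_le (y * x'⁻¹) (x' * x⁻¹) hi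
      rw [mem_walkSupport]
      rcases Finset.mem_union.1 this with hi' | hi'
      · obtain ⟨e, he, hie⟩ := (mem_walkSupport q i).1 (ih hi')
        exact ⟨e, by simp [Walk.edges_cons, he], hie⟩
      · exact ⟨s(x, x'), by simp [Walk.edges_cons], hi'⟩

/-- For two vertices on the same walk, the quotient permutation has support within
the walk support. -/
lemma support_mem_mul_inv_mem {x y w u : Equiv.Perm (Fin n)} (p : G.Walk x y)
    (hw : w ∈ p.support) (hu : u ∈ p.support) :
    (w * u⁻¹).support ⊆ walkSupport p := by
  have h1 : (w * x⁻¹).support ⊆ walkSupport p := by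
    refine (support_end_mul_inv_start (p.takeUntil w hw)).trans
      (walkSupport_subset_of_edges ?_)
    exact fun e he => p.edges_takeUntil_subset hw he
  have h2 : (u * x⁻¹).support ⊆ walkSupport p := by
    refine (support_end_mul_inv_start (p.takeUntil u hu)).trans
      (walkSupport_subset_of_edges ?_)
    exact fun e he => p.edges_takeUntil_subset hu he
  have key : w * u⁻¹ = (w * x⁻¹) * (u * x⁻¹)⁻¹ := by group
  rw [key]
  intro i hi
  rcases Finset.mem_union.1 (Equiv.Perm.support_mul_le _ _ hi) with hi' | hi'
  · exact h1 hi'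
  · rw [Equiv.Perm.support_inv] at hi'
    exact h2 hi'

/-- Lemma C : a permutation whose support is contained in that of a swap is
trivial or the swap itself. -/
lemma eq_one_or_eq_swap {x y : Fin n} (hxy : x ≠ y) (σ : Equiv.Perm (Fin n))
    (h : σ.support ⊆ (Equiv.swap x y).support) :
    σ = 1 ∨ σ = Equiv.swap x y := by
  rw [Equiv.Perm.support_swap hxy] at h
  have hmem : ∀ p : Fin n, p ≠ x → p ≠ y → σ p = p := by
    intro p hpx hpy
    by_contra hp
    have := h (Equiv.Perm.mem_support.2 hp)
    simp [hpx, hpy] at this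
  have himg : ∀ p : Fin n, σ p ≠ p → (σ p = x ∨ σ p = y) := by
    intro p hp
    have : σ p ∈ σ.support := Equiv.Perm.apply_mem_support.2 (Equiv.Perm.mem_support.2 hp)
    have := h this
    rcases Finset.mem_insert.1 this with h1 | h1
    · exact Or.inl h1
    · exact Or.inr (Finset.mem_singleton.1 h1)
  by_cases hx : σ x = x
  · left
    have hy : σ y = y := by
      by_contra hy
      rcases himg y hy with h1 | h1
      · exact hxy (σ.injective (hx.trans h1.symm))
      · exact hy h1
    ext p
    by_cases hpx : p = x
    · simp [hpx, hx]
    by_cases hpy : p = y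
    · simp [hpy, hy]
    simp [hmem p hpx hpy]
  · right
    have hx' : σ x = y := by
      rcases himg x hx with h1 | h1
      · exact absurd h1 hx
      · exact h1
    have hy' : σ y = x := by
      have hyne : σ y ≠ y := fun hyy => hxy (σ.injective (hx'.trans hyy.symm))
      rcases himg y hyne with h1 | h1
      · exact h1
      · exact absurd h1 hyne
    ext p
    by_cases hpx : p = x
    · simp [hpx, hx', Equiv.swap_apply_left]
    by_cases hpy : p = y
    · simp [hpy, hy', Equiv.swap_apply_right]
    simp [hmem p hpx hpy, Equiv.swap_apply_of_ne_of_ne hpx hpy]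

end Aux

section Graph

variable {V : Type*} {G : SimpleGraph V}

/-- In a path from `x` to `y` containing the edge `s(x,y)`, the path has length 1. -/
lemma path_length_one_of_edge {x y : V} (W : G.Walk x y) (hW : W.IsPath)
    (he : s(x, y) ∈ W.edges) : W.length = 1 := by
  cases W with
  | nil => simp at he
  | @cons _ x₁ _ h W' =>
      rw [Walk.edges_cons, List.mem_cons] at he
      rcases he with he | he
      · have hyx₁ : y = x₁ := by
          rcases Sym2.eq_iff.1 he with ⟨-, h2⟩ | ⟨h1, -⟩
          · exact h2
          · exact absurd h1 (G.ne_of_adj h)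
        subst hyx₁
        have : W' = Walk.nil := (Walk.isPath_iff_eq_nil (p := W')).1 hW.of_cons
        simp [this]
      · exact absurd (W'.fst_mem_support_of_mem_edges he)
          ((Walk.cons_isPath_iff h W').1 hW).2

/-- Gluing two internally disjoint paths into a cycle. -/
lemma glue_isCycle {u z : V} (huz : u ≠ z) (P : G.Walk u z) (Q : G.Walk z u)
    (hP : P.IsPath) (hQ : Q.IsPath)
    (hshared : ∀ w, w ∈ P.support → w ∈ Q.support → w = u ∨ w = z)
    (heP : s(u, z) ∉ P.edges) (heQ : s(u, z) ∉ Q.edges) :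
    (P.append Q).IsCycle := by
  rw [Walk.isCycle_def]
  refine ⟨⟨?_⟩, ?_, ?_⟩
  · -- edges nodup
    rw [Walk.edges_append, List.nodup_append]
    refine ⟨hP.isTrail.edges_nodup, hQ.isTrail.edges_nodup, ?_⟩
    intro f hfP g hfQ hfg
    subst g
    induction f using Sym2.ind with
    | _ a b =>
        have hadj : G.Adj a b := P.adj_of_mem_edges hfP
        have haP := P.fst_mem_support_of_mem_edges hfP
        have hbP := P.snd_mem_support_of_mem_edges hfP
        have haQ := Q.fst_mem_support_of_mem_edges hfQ
        have hbQ := Q.snd_mem_support_of_mem_edges hfQ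
        have ha := hshared a haP haQ
        have hb := hshared b hbP hbQ
        have hab := G.ne_of_adj hadj
        rcases ha with ha | ha <;> rcases hb with hb | hb
        · exact hab (ha.trans hb.symm)
        · subst ha; subst hb; exact heP hfP
        · subst ha; subst hb; exact heP (by rwa [Sym2.eq_swap] at hfP)
        · exact hab (ha.trans hb.symm)
  · -- ≠ nil
    intro hnil
    have : (P.append Q).length = 0 := by rw [hnil]; rfl
    rw [Walk.length_append] at this
    have hP0 : P.length = 0 := by omega
    exact huz (Walk.eq_of_length_eq_zero hP0 ▸ rfl)
  · -- support.tail nodup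
    have hsupp : (P.append Q).support.tail = P.support.tail ++ Q.support.tail := by
      rw [Walk.support_append, Walk.support_eq_cons P]
      rfl
    rw [hsupp, List.nodup_append]
    have hPn : P.support.Nodup := hP.support_nodup
    have hQn : Q.support.Nodup := hQ.support_nodup
    refine ⟨hPn.tail, hQn.tail, ?_⟩
    intro w hwP w' hwQ hww
    subst w'
    have hwP' : w ∈ P.support := List.mem_of_mem_tail hwP
    have hwQ' : w ∈ Q.support := List.mem_of_mem_tail hwQ
    rcases hshared w hwP' hwQ' with hw | hw
    · subst hw
      rw [Walk.support_eq_cons P] at hPn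
      exact (List.nodup_cons.1 hPn).1 hwP
    · subst hw
      rw [Walk.support_eq_cons Q] at hQn
      exact (List.nodup_cons.1 hQn).1 hwQ

/-- Splitting a cycle at an edge: the rest of the cycle is a path avoiding that edge. -/
lemma cycle_split [DecidableEq V] {v u z : V} (c : G.Walk v v) (hc : c.IsCycle)
    (he : s(u, z) ∈ c.edges) :
    ∃ P : G.Walk u z, P.IsPath ∧ s(u, z) ∉ P.edges ∧ (∀ f ∈ P.edges, f ∈ c.edges) ∧
      (∀ w ∈ P.support, w ∈ c.support) ∧ P.length + 1 = c.length := by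
  have huz : u ≠ z := G.ne_of_adj (c.adj_of_mem_edges he)
  have hu : u ∈ c.support := c.fst_mem_support_of_mem_edges he
  set d := c.rotate u hu with hd_def
  have hd : d.IsCycle := hc.rotate hu
  have hde : ∀ f, f ∈ d.edges ↔ f ∈ c.edges := fun f => (c.rotate_edges u hu).mem_iff
  have hds : ∀ w, w ∈ d.support → w ∈ c.support := by
    intro w hw
    rw [Walk.support_eq_cons d] at hw
    rcases List.mem_cons.1 hw with hw | hw
    · exact hw ▸ hu
    · exact List.mem_of_mem_tail ((c.support_rotate u hu).mem_iff.1 hw)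
  have hdlen : d.length = c.length := by
    rw [hd_def, Walk.rotate, Walk.length_append, add_comm, ← Walk.length_append,
      c.take_spec hu]
  have he' : s(u, z) ∈ d.edges := (hde _).2 he
  have hz : z ∈ d.support := d.snd_mem_support_of_mem_edges he'
  set p := d.takeUntil z hz with hp_def
  set q := d.dropUntil z hz with hq_def
  have hpq : p.append q = d := d.take_spec hz
  have hsupp : d.support.tail = p.support.tail ++ q.support.tail := by
    rw [← hpq, Walk.support_append, Walk.support_eq_cons p]
    rfl
  have htail : d.support.tail.Nodup := hd.support_nodup
  rw [hsupp, List.nodup_append] at htail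
  obtain ⟨hpn, hqn, hdisj⟩ := htail
  -- z ∈ p.support.tail, u ∈ q.support.tail
  have hzp : z ∈ p.support.tail := by
    have := p.end_mem_support
    rw [Walk.support_eq_cons p] at this
    rcases List.mem_cons.1 this with h1 | h1
    · exact absurd h1.symm huz
    · exact h1
  have huq : u ∈ q.support.tail := by
    have := q.end_mem_support
    rw [Walk.support_eq_cons q] at this
    rcases List.mem_cons.1 this with h1 | h1
    · exact absurd h1 huz
    · exact h1
  have hup : u ∉ p.support.tail := fun h => hdisj _ h _ huq rfl
  have hzq : z ∉ q.support.tail := fun h => hdisj _ hzp _ h rfl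
  have hpPath : p.IsPath := by
    rw [Walk.isPath_def, Walk.support_eq_cons p, List.nodup_cons]
    exact ⟨hup, hpn⟩
  have hqPath : q.IsPath := by
    rw [Walk.isPath_def, Walk.support_eq_cons q, List.nodup_cons]
    exact ⟨hzq, hqn⟩
  have hedges : d.edges = p.edges ++ q.edges := by
    rw [← hpq, Walk.edges_append]
  have htrail : d.edges.Nodup := hd.isTrail.edges_nodup
  rw [hedges, List.nodup_append] at htrail
  obtain ⟨-, -, hedisj⟩ := htrail
  have hplen : p.length + q.length = d.length := by
    rw [← hpq, Walk.length_append]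
  have hmemp : ∀ w ∈ p.support, w ∈ d.support := by
    intro w hw
    rw [Walk.support_eq_cons p] at hw
    rcases List.mem_cons.1 hw with hw | hw
    · exact hw ▸ d.start_mem_support
    · exact List.mem_of_mem_tail (hsupp ▸ List.mem_append_left _ hw)
  have hmemq : ∀ w ∈ q.support, w ∈ d.support := by
    intro w hw
    rw [Walk.support_eq_cons q] at hw
    rcases List.mem_cons.1 hw with hw | hw
    · exact hw ▸ (hmemp z p.end_mem_support)
    · exact List.mem_of_mem_tail (hsupp ▸ List.mem_append_right _ hw)
  rcases List.mem_append.1 (hedges ▸ he') with hep | heq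
  · -- the edge is in p, so p has length 1; use the reverse of q
    have hp1 : p.length = 1 := path_length_one_of_edge p hpPath hep
    refine ⟨q.reverse, hqPath.reverse, ?_, ?_, ?_, ?_⟩
    · rw [Walk.edges_reverse, List.mem_reverse]
      exact fun h => hedisj _ hep _ (Sym2.eq_swap ▸ h : s(u, z) ∈ q.edges) rfl
    · intro f hf
      rw [Walk.edges_reverse, List.mem_reverse] at hf
      exact (hde f).1 (hedges ▸ List.mem_append_right _ hf)
    · intro w hw
      rw [Walk.support_reverse, List.mem_reverse] at hw
      exact hds w (hmemq w hw)
    · rw [Walk.length_reverse]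
      omega
  · -- the edge is in q, so q has length 1; use p
    have hq1 : q.length = 1 := path_length_one_of_edge q hqPath (Sym2.eq_swap ▸ heq)
    refine ⟨p, hpPath, ?_, ?_, ?_, ?_⟩
    · exact fun h => hedisj _ h _ heq rfl
    · intro f hf
      exact (hde f).1 (hedges ▸ List.mem_append_left _ hf)
    · intro w hw
      exact hds w (hmemp w hw)
    · omega

end Graph

theorem stmt_14 {n a b : ℕ} (ha : 2 ≤ a) (hb : 2 ≤ b)
    (G : SimpleGraph (Equiv.Perm (Fin n))) (hG : G ≤ CT n)
    (hfree : ∀ (v : Equiv.Perm (Fin n)) (c : G.Walk v v), c.IsCycle → c.length ≠ 4 * a + 4 * b - 2)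
    (v v' : Equiv.Perm (Fin n)) (c : G.Walk v v) (c' : G.Walk v' v')
    (hc : c.IsCycle) (hc' : c'.IsCycle)
    (hlen : c.length = 4 * a) (hlen' : c'.length = 4 * b)
    (hcommon : ∃ e, e ∈ c.edges ∧ e ∈ c'.edges) :
    3 ≤ (walkSupport c ∩ walkSupport c').card := by
  classical
  obtain ⟨e, hec, hec'⟩ := hcommon
  revert hec hec'
  induction e using Sym2.ind with
  | _ u z =>
    intro hec hec'
    have hadjG : G.Adj u z := c.adj_of_mem_edges hec
    have huz : u ≠ z := G.ne_of_adj hadjG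
    obtain ⟨x, y, hxy, ht⟩ : (z * u⁻¹).IsSwap := hG hadjG
    by_contra hcard
    push_neg at hcard
    set S := walkSupport c ∩ walkSupport c' with hS_def
    have hts : (z * u⁻¹).support ⊆ S := by
      intro i hi
      have hie : i ∈ edgeSupport s(u, z) := by simpa [edgeSupport] using hi
      exact Finset.mem_inter.2 ⟨(mem_walkSupport c i).2 ⟨_, hec, hie⟩,
        (mem_walkSupport c' i).2 ⟨_, hec', hie⟩⟩
    rw [ht] at hts
    have hcard2 : (Equiv.swap x y).support.card = 2 := Equiv.Perm.card_support_swap hxy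
    have hSeq : (Equiv.swap x y).support = S :=
      Finset.eq_of_subset_of_card_le hts (by omega)
    have hu_c : u ∈ c.support := c.fst_mem_support_of_mem_edges hec
    have hu_c' : u ∈ c'.support := c'.fst_mem_support_of_mem_edges hec'
    have hcommonV : ∀ w, w ∈ c.support → w ∈ c'.support → w = u ∨ w = z := by
      intro w hwc hwc'
      have h1 : (w * u⁻¹).support ⊆ walkSupport c := support_mem_mul_inv_mem c hwc hu_c
      have h2 : (w * u⁻¹).support ⊆ walkSupport c' := support_mem_mul_inv_mem c' hwc' hu_c'
      have hsub : (w * u⁻¹).support ⊆ (Equiv.swap x y).support := by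
        rw [hSeq]; exact Finset.subset_inter h1 h2
      rcases eq_one_or_eq_swap hxy _ hsub with h | h
      · exact Or.inl (mul_inv_eq_one.1 h)
      · right
        have : w * u⁻¹ = z * u⁻¹ := by rw [h, ht]
        exact mul_right_cancel this
    obtain ⟨P, hPpath, hPe, hPedges, hPsupp, hPlen⟩ := cycle_split c hc hec
    obtain ⟨P', hP'path, hP'e, hP'edges, hP'supp, hP'len⟩ := cycle_split c' hc' hec'
    have hQe : s(u, z) ∉ P'.reverse.edges := by
      rw [SimpleGraph.Walk.edges_reverse, List.mem_reverse]
      exact hP'e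
    have hshared : ∀ w, w ∈ P.support → w ∈ P'.reverse.support → w = u ∨ w = z := by
      intro w hwP hwQ
      rw [SimpleGraph.Walk.support_reverse, List.mem_reverse] at hwQ
      exact hcommonV w (hPsupp w hwP) (hP'supp w hwQ)
    have hcycle : (P.append P'.reverse).IsCycle :=
      glue_isCycle huz P P'.reverse hPpath hP'path.reverse hshared hPe hQe
    refine hfree u (P.append P'.reverse) hcycle ?_
    rw [SimpleGraph.Walk.length_append, SimpleGraph.Walk.length_reverse]
    omega
end

section
/- Any C_4-free spanning subgraph G of the complete transposition graph CT_n (n ≥ 3) satisfies e(G) ≤ (3/4)·e(CT_n). -/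
open Finset



-- number of swaps in Perm (Fin n)
lemma swap_card (n : ℕ) [DecidablePred (Equiv.Perm.IsSwap : Equiv.Perm (Fin n) → Prop)] :
    (Finset.univ.filter (fun f : Equiv.Perm (Fin n) => f.IsSwap)).card = n.choose 2 := by
  have hrw : n.choose 2 = ((Finset.univ : Finset (Fin n)).powersetCard 2).card := by
    rw [Finset.card_powersetCard, Finset.card_univ, Fintype.card_fin]
  rw [hrw]
  apply Finset.card_bij (fun f _ => Equiv.Perm.support f)
  · intro f hf
    simp only [Finset.mem_filter] at hf
    obtain ⟨a, b, hab, rfl⟩ := hf.2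
    simpa [Finset.mem_powersetCard_univ] using Equiv.Perm.card_support_swap hab
  · intro f hf g hg hfg
    simp only [Finset.mem_filter] at hf hg
    obtain ⟨a, b, hab, rfl⟩ := hf.2
    obtain ⟨c, d, hcd, rfl⟩ := hg.2
    rw [Equiv.Perm.support_swap hab, Equiv.Perm.support_swap hcd] at hfg
    have ha : a = c ∨ a = d := by
      have : a ∈ ({c, d} : Finset (Fin n)) := hfg ▸ (by simp)
      simpa using this
    have hb : b = c ∨ b = d := by
      have : b ∈ ({c, d} : Finset (Fin n)) := hfg ▸ (by simp)
      simpa using this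
    rcases ha with rfl | rfl <;> rcases hb with rfl | rfl
    · exact absurd rfl hab
    · rfl
    · exact Equiv.swap_comm _ _
    · exact absurd rfl hab
  · intro s hs
    rw [Finset.mem_powersetCard_univ] at hs
    obtain ⟨a, b, hab, rfl⟩ := Finset.card_eq_two.mp hs
    exact ⟨Equiv.swap a b, by simp [Finset.mem_filter]; exact ⟨a, b, hab, rfl⟩,
      Equiv.Perm.support_swap hab⟩

lemma ct_adj {n : ℕ} {x y : Equiv.Perm (Fin n)} : (CT n).Adj x y ↔ (y * x⁻¹).IsSwap := Iff.rfl

lemma ct_nf {n : ℕ} [DecidableRel (CT n).Adj]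
    [DecidablePred (Equiv.Perm.IsSwap : Equiv.Perm (Fin n) → Prop)] (x : Equiv.Perm (Fin n)) :
    (CT n).neighborFinset x
      = (Finset.univ.filter (fun f : Equiv.Perm (Fin n) => f.IsSwap)).image (fun t => t * x) := by
  ext y
  simp only [SimpleGraph.mem_neighborFinset, Finset.mem_image, Finset.mem_filter, Finset.mem_univ,
    true_and]
  constructor
  · intro h
    exact ⟨y * x⁻¹, h, by group⟩
  · rintro ⟨t, ht, rfl⟩
    show (t * x * x⁻¹).IsSwap
    simpa using ht

lemma ct_degree {n : ℕ} [DecidableRel (CT n).Adj]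
    [DecidablePred (Equiv.Perm.IsSwap : Equiv.Perm (Fin n) → Prop)] (x : Equiv.Perm (Fin n)) :
    (CT n).degree x = n.choose 2 := by
  rw [← SimpleGraph.card_neighborFinset_eq_degree, ct_nf,
    Finset.card_image_of_injective _ (mul_left_injective x), swap_card]

lemma ct_count {n : ℕ} [DecidableRel (CT n).Adj]
    [DecidablePred (Equiv.Perm.IsSwap : Equiv.Perm (Fin n) → Prop)] :
    2 * (CT n).edgeFinset.card = Fintype.card (Equiv.Perm (Fin n)) * n.choose 2 := by
  rw [← SimpleGraph.sum_degrees_eq_twice_card_edges]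
  rw [Finset.sum_congr rfl (fun x _ => ct_degree x), Finset.sum_const, Finset.card_univ,
    smul_eq_mul]

lemma no_c4 {V : Type*} {G : SimpleGraph V}
    (hfree : ∀ (v : V) (c : G.Walk v v), c.IsCycle → c.length ≠ 4)
    {x v y w : V} (hxy : x ≠ y) (hvw : v ≠ w)
    (h1 : G.Adj v x) (h2 : G.Adj v y) (h3 : G.Adj w x) (h4 : G.Adj w y) : False := by
  refine hfree x (.cons h1.symm (.cons h2 (.cons h4.symm (.cons h3 .nil)))) ?_ rfl
  rw [SimpleGraph.Walk.isCycle_def]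
  refine ⟨?_, by simp, ?_⟩
  · rw [SimpleGraph.Walk.isTrail_def]
    simp only [SimpleGraph.Walk.edges_cons, SimpleGraph.Walk.edges_nil, List.nodup_cons,
      List.mem_cons, List.mem_singleton, List.not_mem_nil, or_false, List.nodup_nil, and_true,
      Sym2.eq_iff]
    have e1 := h1.ne
    have e2 := h2.ne
    have e3 := h3.ne
    have e4 := h4.ne
    refine ⟨?_, ?_, ?_⟩ <;> push_neg <;> aesop
  · simp only [SimpleGraph.Walk.support_cons, SimpleGraph.Walk.support_nil, List.tail_cons,
      List.nodup_cons, List.mem_cons, List.mem_singleton, List.not_mem_nil, or_false,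
      List.nodup_nil, and_true]
    have e1 := h1.ne
    have e2 := h2.ne
    have e3 := h3.ne
    have e4 := h4.ne
    push_neg
    aesop

lemma s_bound {n : ℕ} [DecidablePred (Equiv.Perm.IsSwap : Equiv.Perm (Fin n) → Prop)] :
    2 * (((Finset.univ.filter (fun f : Equiv.Perm (Fin n) => f.IsSwap)).offDiag).image
        (fun p => p.1 * p.2)).card
      ≤ n.choose 2 * n.choose 2 - n.choose 2 := by
  set sw := Finset.univ.filter (fun f : Equiv.Perm (Fin n) => f.IsSwap) with hsw
  set S := sw.offDiag.image (fun p : Equiv.Perm (Fin n) × Equiv.Perm (Fin n) => p.1 * p.2) with hS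
  have hcard : sw.offDiag.card = ∑ q ∈ S, (sw.offDiag.filter (fun p => p.1 * p.2 = q)).card :=
    Finset.card_eq_sum_card_fiberwise (fun p hp => Finset.mem_image_of_mem _ hp)
  have hfib : ∀ q ∈ S, 2 ≤ (sw.offDiag.filter (fun p => p.1 * p.2 = q)).card := by
    intro q hq
    rw [hS, Finset.mem_image] at hq
    obtain ⟨⟨s, t⟩, hst, rfl⟩ := hq
    rw [Finset.mem_offDiag] at hst
    have hs : s ∈ sw := hst.1
    have ht : t ∈ sw := hst.2.1
    have hne : s ≠ t := hst.2.2
    have hseq : s.IsSwap := (Finset.mem_filter.mp hs).2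
    obtain ⟨a, b, hab, hseq⟩ := hseq
    have hss : s * s = 1 := by rw [hseq]; exact Equiv.swap_mul_self a b
    have hsinv : s⁻¹ = s := by rw [hseq]; exact Equiv.swap_inv a b
    have hsts : (s * t * s).IsSwap := by
      have hteq : t.IsSwap := (Finset.mem_filter.mp ht).2
      obtain ⟨c, d, hcd, hteq⟩ := hteq
      refine ⟨s c, s d, fun h => hcd (s.injective h), ?_⟩
      rw [Equiv.swap_apply_apply, hteq, hsinv]
    have hne2 : s * t * s ≠ s := by
      intro h
      apply hne
      have h1 : s⁻¹ * (s * t * s) * s⁻¹ = s⁻¹ * s * s⁻¹ := by rw [h]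
      have h2 : s⁻¹ * (s * t * s) * s⁻¹ = t := by group
      rw [h2] at h1
      simp only [hsinv] at h1
      rw [h1, hss, one_mul]
    have hmem2 : (s * t * s, s) ∈ sw.offDiag.filter (fun p => p.1 * p.2 = s * t) := by
      rw [Finset.mem_filter, Finset.mem_offDiag]
      refine ⟨⟨?_, hs, hne2⟩, ?_⟩
      · rw [hsw, Finset.mem_filter]; exact ⟨Finset.mem_univ _, hsts⟩
      · show s * t * s * s = s * t
        rw [mul_assoc, hss, mul_one]
    have hmem1 : (s, t) ∈ sw.offDiag.filter (fun p => p.1 * p.2 = s * t) := by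
      rw [Finset.mem_filter, Finset.mem_offDiag]
      exact ⟨⟨hs, ht, hne⟩, rfl⟩
    apply Finset.one_lt_card.mpr ⟨_, hmem1, _, hmem2, ?_⟩
    intro h
    exact hne2 (congrArg Prod.fst h).symm
  have h2S : 2 * S.card ≤ sw.offDiag.card := by
    rw [hcard]
    calc 2 * S.card = ∑ _q ∈ S, 2 := by rw [Finset.sum_const, smul_eq_mul, mul_comm]
      _ ≤ _ := Finset.sum_le_sum hfib
  calc 2 * S.card ≤ sw.offDiag.card := h2S
    _ = sw.card * sw.card - sw.card := Finset.offDiag_card sw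
    _ = n.choose 2 * n.choose 2 - n.choose 2 := by rw [hsw, swap_card]

lemma arith_c4 (e nn t s q2 : ℚ) (hnn1 : 1 ≤ nn) (ht3 : 3 ≤ t) (hs0 : 0 ≤ s) (he0 : 0 ≤ e)
    (hcs : (2 * e) ^ 2 ≤ nn * q2) (hq2 : q2 - 2 * e ≤ nn * s)
    (hD : 2 * s + t ≤ t * t) (hH8 : 3 * (nn * t) + 2 ≤ 8 * e)
    (hcase : 4 ≤ t ∨ (nn = 6 ∧ t = 3)) : False := by
  have hnn0 : (0 : ℚ) ≤ nn := by linarith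
  have key1 : 4 * e ^ 2 ≤ nn * nn * s + 2 * nn * e := by
    nlinarith [mul_le_mul_of_nonneg_left hq2 hnn0]
  have hnt : 3 * nn ≤ nn * t := by nlinarith
  have hside : (0 : ℚ) ≤ 8 * e + (3 * (nn * t) + 2) - 4 * nn := by linarith
  have key2 : (0 : ℚ) ≤ (8 * e - (3 * (nn * t) + 2)) * (8 * e + (3 * (nn * t) + 2) - 4 * nn) :=
    mul_nonneg (by linarith) hside
  have key3 : nn * nn * (t * t) + 12 * (nn * t) + 4 ≤ 4 * (nn * nn * t) + 8 * nn := by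
    nlinarith [key1, key2, mul_le_mul_of_nonneg_left hD (mul_nonneg hnn0 hnn0)]
  rcases hcase with h4 | ⟨hnn6, ht3'⟩
  · nlinarith [key3, mul_nonneg (mul_nonneg (mul_nonneg hnn0 hnn0) (by linarith : (0:ℚ) ≤ t))
      (by linarith : (0:ℚ) ≤ t - 4), hnn1, ht3]
  · rw [hnn6, ht3'] at key3
    norm_num at key3

/-- Any `C₄`-free (spanning) subgraph `G` of `CT n` has at most `(3/4) e(CT n)` edges. -/
theorem stmt_16 {n : ℕ} (hn : 3 ≤ n) (G : SimpleGraph (Equiv.Perm (Fin n))) (hG : G ≤ CT n)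
    (hfree : ∀ (v : Equiv.Perm (Fin n)) (c : G.Walk v v), c.IsCycle → c.length ≠ 4) :
    4 * Nat.card G.edgeSet ≤ 3 * Nat.card (CT n).edgeSet := by
  classical
  set T := n.choose 2 with hT
  set N := Fintype.card (Equiv.Perm (Fin n)) with hN
  set sw := Finset.univ.filter (fun f : Equiv.Perm (Fin n) => f.IsSwap) with hsw
  set S := sw.offDiag.image (fun p : Equiv.Perm (Fin n) × Equiv.Perm (Fin n) => p.1 * p.2)
    with hSdef
  by_contra hcon
  push_neg at hcon
  rw [Nat.card_eq_fintype_card, Nat.card_eq_fintype_card, ← SimpleGraph.edgeFinset_card,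
    ← SimpleGraph.edgeFinset_card] at hcon
  set E := G.edgeFinset.card with hE
  set C := (CT n).edgeFinset.card with hC
  have hCT2 : 2 * C = N * T := ct_count
  -- paths bound
  have hdisj : ∀ v ∈ (Finset.univ : Finset (Equiv.Perm (Fin n))), ∀ w ∈ Finset.univ, v ≠ w →
      Disjoint ((G.neighborFinset v).offDiag) ((G.neighborFinset w).offDiag) := by
    intro v _ w _ hvw
    rw [Finset.disjoint_left]
    rintro ⟨x, y⟩ hxv hxw
    rw [Finset.mem_offDiag] at hxv hxw
    simp only [SimpleGraph.mem_neighborFinset] at hxv hxw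
    exact no_c4 hfree hxv.2.2 hvw hxv.1 hxv.2.1 hxw.1 hxw.2.1
  have hsub : (Finset.univ.biUnion fun v => (G.neighborFinset v).offDiag)
      ⊆ (Finset.univ ×ˢ S).image (fun p => (p.1, p.2 * p.1)) := by
    rintro ⟨x, y⟩ hxy
    rw [Finset.mem_biUnion] at hxy
    obtain ⟨v, _, hv⟩ := hxy
    rw [Finset.mem_offDiag] at hv
    simp only [SimpleGraph.mem_neighborFinset] at hv
    have h1 : G.Adj v x := hv.1
    have h2 : G.Adj v y := hv.2.1
    have hne : x ≠ y := hv.2.2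
    have ht : (y * v⁻¹).IsSwap := hG h2
    have hs : (v * x⁻¹).IsSwap := hG h1.symm
    have hσ : (v * x⁻¹)⁻¹ = v * x⁻¹ := by
      obtain ⟨a, b, hab, he⟩ := hs
      rw [he]; exact Equiv.swap_inv a b
    have hnst : y * v⁻¹ ≠ v * x⁻¹ := by
      intro h
      apply hne
      have hx : x = (v * x⁻¹)⁻¹ * v := by group
      have hy : y = (y * v⁻¹) * v := by group
      rw [hx, hσ, ← h, ← hy]
    rw [Finset.mem_image]
    refine ⟨(x, y * x⁻¹), ?_, by simp⟩
    rw [Finset.mem_product]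
    refine ⟨Finset.mem_univ _, ?_⟩
    rw [hSdef, Finset.mem_image]
    refine ⟨(y * v⁻¹, v * x⁻¹), ?_, by group⟩
    rw [Finset.mem_offDiag]
    refine ⟨?_, ?_, hnst⟩
    · rw [hsw, Finset.mem_filter]; exact ⟨Finset.mem_univ _, ht⟩
    · rw [hsw, Finset.mem_filter]; exact ⟨Finset.mem_univ _, hs⟩
  have hPath : ∑ v, ((G.neighborFinset v).offDiag).card ≤ N * S.card := by
    rw [← Finset.card_biUnion hdisj]
    calc (Finset.univ.biUnion fun v => (G.neighborFinset v).offDiag).card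
        ≤ ((Finset.univ ×ˢ S).image (fun p => (p.1, p.2 * p.1))).card :=
          Finset.card_le_card hsub
      _ ≤ (Finset.univ ×ˢ S).card := Finset.card_image_le
      _ = N * S.card := by rw [Finset.card_product, Finset.card_univ]
  have hHS : ∑ v, G.degree v = 2 * E := SimpleGraph.sum_degrees_eq_twice_card_edges G
  have hod : ∀ v : Equiv.Perm (Fin n),
      ((G.neighborFinset v).offDiag).card = G.degree v * G.degree v - G.degree v := by
    intro v
    rw [Finset.offDiag_card, SimpleGraph.card_neighborFinset_eq_degree]
  -- numeric part
  have hT3 : 3 ≤ T := by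
    calc 3 = Nat.choose 3 2 := by decide
      _ ≤ n.choose 2 := Nat.choose_le_choose 2 hn
  have hTle : T ≤ T * T := Nat.le_mul_of_pos_left T (by omega)
  have hSb : 2 * S.card + T ≤ T * T := by
    have h := s_bound (n := n)
    rw [← hsw, ← hSdef, ← hT] at h
    omega
  have h8 : 3 * (N * T) + 2 ≤ 8 * E := by
    have h4 : 3 * C + 1 ≤ 4 * E := hcon
    calc 3 * (N * T) + 2 = 6 * C + 2 := by rw [← hCT2]; ring
      _ ≤ 8 * E := by omega
  have hcase : 4 ≤ T ∨ (N = 6 ∧ T = 3) := by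
    rcases eq_or_lt_of_le hn with h3 | h4
    · right
      constructor
      · rw [hN, ← h3]
        rw [Fintype.card_perm, Fintype.card_fin]
        decide
      · rw [hT, ← h3]
        decide
    · left
      calc 4 ≤ Nat.choose 4 2 := by decide
        _ ≤ n.choose 2 := Nat.choose_le_choose 2 h4
  -- pass to ℚ
  have hcs : (∑ v, (G.degree v : ℚ)) ^ 2 ≤ (N : ℚ) * ∑ v, (G.degree v : ℚ) ^ 2 := by
    have := sq_sum_le_card_mul_sum_sq (s := (Finset.univ : Finset (Equiv.Perm (Fin n))))
      (f := fun v => (G.degree v : ℚ))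
    simpa [Finset.card_univ] using this
  have hq1 : (∑ v, (G.degree v : ℚ)) = 2 * (E : ℚ) := by
    rw [← Nat.cast_sum, hHS]; push_cast; ring
  have hq2 : (∑ v, (G.degree v : ℚ) ^ 2) - (∑ v, (G.degree v : ℚ))
      ≤ (N : ℚ) * (S.card : ℚ) := by
    have hcast : ((∑ v, ((G.neighborFinset v).offDiag).card : ℕ) : ℚ)
        = (∑ v, (G.degree v : ℚ) ^ 2) - (∑ v, (G.degree v : ℚ)) := by
      rw [Nat.cast_sum, ← Finset.sum_sub_distrib]
      apply Finset.sum_congr rfl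
      intro v _
      rw [hod v]
      have hle : G.degree v ≤ G.degree v * G.degree v := by
        rcases Nat.eq_zero_or_pos (G.degree v) with h | h
        · simp [h]
        · exact Nat.le_mul_of_pos_left _ h
      rw [Nat.cast_sub hle]
      push_cast
      ring
    rw [← hcast]
    exact_mod_cast hPath
  have hcaseQ : (4:ℚ) ≤ (T:ℚ) ∨ ((N:ℚ) = 6 ∧ (T:ℚ) = 3) := by
    rcases hcase with h | ⟨h1, h2⟩
    · left; exact_mod_cast h
    · right; exact ⟨by exact_mod_cast h1, by exact_mod_cast h2⟩
  rw [hq1] at hcs hq2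
  refine arith_c4 (E : ℚ) (N : ℚ) (T : ℚ) (S.card : ℚ) (∑ v, (G.degree v : ℚ) ^ 2)
    ?_ ?_ ?_ ?_ ?_ hq2 ?_ ?_ hcaseQ
  · exact_mod_cast Fintype.card_pos
  · exact_mod_cast hT3
  · exact Nat.cast_nonneg _
  · exact Nat.cast_nonneg _
  · exact hcs
  · exact_mod_cast hSb
  · exact_mod_cast h8
end

section
/- In the complete transposition graph CT_n (n ≥ 3), for any fixed edge e there are at most two 4-cycles H containing e such that the three edges of H other than e all belong to a given fixed C_6-free and triangle-free subgraph G of CT_n. -/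
open Equiv Equiv.Perm

section helpers
variable {α : Type*} [DecidableEq α] [Fintype α]

lemma swap_eq_of_isSwap_of_apply {s : Equiv.Perm α} {a b : α}
    (hs : s.IsSwap) (hab : a ≠ b) (h : s b = a) : s = Equiv.swap a b := by
  obtain ⟨c, d, hcd, rfl⟩ := hs
  by_cases hbc : b = c
  · subst hbc
    rw [Equiv.swap_apply_left] at h
    subst h
    exact Equiv.swap_comm _ _
  by_cases hbd : b = d
  · subst hbd
    rw [Equiv.swap_apply_right] at h
    subst h
    rfl
  · rw [Equiv.swap_apply_of_ne_of_ne hbc hbd] at h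
    exact absurd h.symm hab

lemma swap_support_subset {g t : Equiv.Perm α} (hg : g ≠ 1) (ht : t.IsSwap)
    (hs : (t * g).IsSwap) : t.support ⊆ g.support := by
  obtain ⟨a, b, hab, rfl⟩ := ht
  rw [Equiv.Perm.support_swap hab]
  have ha : g a ≠ a := by
    intro h
    have h1 : (Equiv.swap a b * g) a = b := by simp [Equiv.Perm.mul_apply, h]
    have h2 : Equiv.swap a b * g = Equiv.swap b a :=
      swap_eq_of_isSwap_of_apply hs hab.symm h1
    rw [Equiv.swap_comm b a] at h2
    exact hg (mul_left_cancel (a := Equiv.swap a b) (by rw [h2, mul_one]))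
  have hb : g b ≠ b := by
    intro h
    have h1 : (Equiv.swap a b * g) b = a := by simp [Equiv.Perm.mul_apply, h]
    have h2 : Equiv.swap a b * g = Equiv.swap a b :=
      swap_eq_of_isSwap_of_apply hs hab h1
    exact hg (mul_left_cancel (a := Equiv.swap a b) (by rw [h2, mul_one]))
  intro x hx
  simp only [Finset.mem_insert, Finset.mem_singleton] at hx
  rcases hx with rfl | rfl <;> simp [Equiv.Perm.mem_support, ha, hb]

lemma swap_eq_of_support_eq {t t' : Equiv.Perm α} (ht : t.IsSwap) (ht' : t'.IsSwap)
    (h : t.support = t'.support) : t = t' := by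
  obtain ⟨a, b, hab, rfl⟩ := ht
  have hb : t' b ≠ b := by
    rw [← Equiv.Perm.mem_support, ← h, Equiv.Perm.support_swap hab]; simp
  have hmem : t' b ∈ t'.support :=
    Equiv.Perm.apply_mem_support.2 (Equiv.Perm.mem_support.2 hb)
  rw [← h, Equiv.Perm.support_swap hab] at hmem
  simp only [Finset.mem_insert, Finset.mem_singleton] at hmem
  rcases hmem with h1 | h1
  · exact (swap_eq_of_isSwap_of_apply ht' hab h1).symm
  · exact absurd h1 hb



lemma four_swaps {g t₁ t₂ t₃ t₄ : Equiv.Perm α} (hg : g ≠ 1)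
    (h1 : t₁.IsSwap) (h1' : (t₁ * g).IsSwap)
    (h2 : t₂.IsSwap) (h2' : (t₂ * g).IsSwap)
    (h3 : t₃.IsSwap) (h3' : (t₃ * g).IsSwap)
    (h4 : t₄.IsSwap) (h4' : (t₄ * g).IsSwap)
    (h12 : t₁ ≠ t₂) (h13 : t₁ ≠ t₃) (h14 : t₁ ≠ t₄)
    (h23 : t₂ ≠ t₃) (h24 : t₂ ≠ t₄) (h34 : t₃ ≠ t₄) : False := by
  -- supports of the tᵢ and of tᵢ*g are inside the support of g
  have hsub : ∀ t : Equiv.Perm α, t.IsSwap → (t * g).IsSwap →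
      t.support ⊆ g.support ∧ (t * g).support ⊆ g.support := by
    intro t ht hs
    refine ⟨swap_support_subset hg ht hs, ?_⟩
    have h' : ((t * g) * g⁻¹).IsSwap := by simpa [mul_assoc] using ht
    have := swap_support_subset (g := g⁻¹) (by simpa using hg) hs h'
    simpa [Equiv.Perm.support_inv] using this
  have hgsub : ∀ t : Equiv.Perm α, t.IsSwap → (t * g).IsSwap →
      g.support ⊆ t.support ∪ (t * g).support := by
    intro t ht hs
    have he : g = t⁻¹ * (t * g) := by group
    calc g.support = (t⁻¹ * (t * g)).support := by rw [← he]
    _ ⊆ t⁻¹.support ∪ (t * g).support := Equiv.Perm.support_mul_le _ _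
    _ = t.support ∪ (t * g).support := by rw [Equiv.Perm.support_inv]
  have hcard : ∀ t : Equiv.Perm α, t.IsSwap → t.support.card = 2 :=
    fun t ht => Equiv.Perm.card_support_eq_two.2 ht
  have hg4 : g.support.card ≤ 4 := by
    calc g.support.card ≤ (t₁.support ∪ (t₁ * g).support).card :=
          Finset.card_le_card (hgsub t₁ h1 h1')
    _ ≤ t₁.support.card + (t₁ * g).support.card := Finset.card_union_le _ _
    _ = 4 := by rw [hcard _ h1, hcard _ h1']
  by_cases hc : g.support.card ≤ 3
  · -- pigeonhole: four distinct 2-subsets of a ≤3-set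
    have hmap : ∀ i : Fin 4, (![t₁, t₂, t₃, t₄] i).support ∈ g.support.powersetCard 2 := by
      intro i
      rw [Finset.mem_powersetCard]
      fin_cases i
      · exact ⟨(hsub t₁ h1 h1').1, hcard _ h1⟩
      · exact ⟨(hsub t₂ h2 h2').1, hcard _ h2⟩
      · exact ⟨(hsub t₃ h3 h3').1, hcard _ h3⟩
      · exact ⟨(hsub t₄ h4 h4').1, hcard _ h4⟩
    have hlt : (g.support.powersetCard 2).card < (Finset.univ : Finset (Fin 4)).card := by
      rw [Finset.card_powersetCard, Finset.card_univ, Fintype.card_fin]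
      have := Nat.choose_le_choose 2 hc
      have h32 : Nat.choose 3 2 = 3 := by decide
      omega
    obtain ⟨i, _, j, _, hij, hfij⟩ :=
      Finset.exists_ne_map_eq_of_card_lt_of_maps_to hlt (fun i _ => hmap i)
    have heq : ![t₁, t₂, t₃, t₄] i = ![t₁, t₂, t₃, t₄] j := by
      refine swap_eq_of_support_eq ?_ ?_ hfij <;> fin_cases i <;> fin_cases j <;> assumption
    fin_cases i <;> fin_cases j <;> simp_all
  · have hc4 : g.support.card = 4 := by omega
    -- in the 4-case, g acts as t on the support of t
    have key : ∀ t : Equiv.Perm α, t.IsSwap → (t * g).IsSwap →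
        (∀ x ∈ t.support, g x = t x) ∧ (∀ x ∈ (t * g).support, g x = (t * g) x) := by
      intro t ht hs
      obtain ⟨hts, hss⟩ := hsub t ht hs
      have hdisj : Disjoint t.support (t * g).support := by
        have hle : 4 ≤ (t.support ∪ (t * g).support).card := by
          rw [← hc4]; exact Finset.card_le_card (hgsub t ht hs)
        have := Finset.card_union_add_card_inter t.support (t * g).support
        rw [hcard _ ht, hcard _ hs] at this
        have hiz : (t.support ∩ (t * g).support).card = 0 := by omega
        rw [Finset.card_eq_zero] at hiz
        exact Finset.disjoint_iff_inter_eq_empty.2 hiz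
      obtain ⟨a, b, hab, rfl⟩ := id ht
      constructor
      · intro x hx
        have hxs : x ∉ (Equiv.swap a b * g).support := Finset.disjoint_left.1 hdisj hx
        have hfix : Equiv.swap a b (g x) = x := Equiv.Perm.notMem_support.1 hxs
        calc g x = Equiv.swap a b (Equiv.swap a b (g x)) := (Equiv.swap_apply_self _ _ _).symm
        _ = Equiv.swap a b x := by rw [hfix]
      · intro x hx
        have hsx : (Equiv.swap a b * g) x ∈ (Equiv.swap a b * g).support :=
          Equiv.Perm.apply_mem_support.2 hx
        have hnt : (Equiv.swap a b * g) x ∉ (Equiv.swap a b).support :=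
          Finset.disjoint_right.1 hdisj hsx
        have hfix : Equiv.swap a b ((Equiv.swap a b * g) x) = (Equiv.swap a b * g) x :=
          Equiv.Perm.notMem_support.1 hnt
        calc g x = Equiv.swap a b (Equiv.swap a b (g x)) := (Equiv.swap_apply_self _ _ _).symm
        _ = (Equiv.swap a b * g) x := hfix
    -- every tᵢ equals swap x (g x) for some x in supp g
    have hform : ∀ t : Equiv.Perm α, t.IsSwap → (t * g).IsSwap →
        ∃ x ∈ g.support, t = Equiv.swap x (g x) := by
      intro t ht hs
      obtain ⟨a, b, hab, rfl⟩ := ht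
      have ha : a ∈ (Equiv.swap a b).support := by
        rw [Equiv.Perm.support_swap hab]; simp
      have hga : g a = Equiv.swap a b a := (key _ ⟨a, b, hab, rfl⟩ hs).1 a ha
      rw [Equiv.swap_apply_left] at hga
      exact ⟨a, (hsub _ ⟨a, b, hab, rfl⟩ hs).1 ha, by rw [hga]⟩
    -- structure of g from t₁
    obtain ⟨a, b, hab, ht1⟩ := id h1
    have hsupp1 : t₁.support = {a, b} := by rw [ht1, Equiv.Perm.support_swap hab]
    obtain ⟨c, d, hcd, hs1⟩ := id h1'
    have hsupps1 : (t₁ * g).support = {c, d} := by rw [hs1, Equiv.Perm.support_swap hcd]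
    have hk := key t₁ h1 h1'
    -- values of g on a b c d
    have hga : g a = b := by
      have := hk.1 a (by rw [hsupp1]; simp)
      rw [this, ht1, Equiv.swap_apply_left]
    have hgb : g b = a := by
      have := hk.1 b (by rw [hsupp1]; simp)
      rw [this, ht1, Equiv.swap_apply_right]
    have hgc : g c = d := by
      have := hk.2 c (by rw [hsupps1]; simp)
      rw [this, hs1, Equiv.swap_apply_left]
    have hgd : g d = c := by
      have := hk.2 d (by rw [hsupps1]; simp)
      rw [this, hs1, Equiv.swap_apply_right]
    -- supp g = {a,b} ∪ {c,d}
    have hgsupp : g.support = {a, b} ∪ {c, d} := by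
      refine Finset.eq_of_subset_of_card_le ?_ ?_
      · rw [← hsupp1, ← hsupps1]; exact hgsub t₁ h1 h1'
      · rw [hc4]
        have e1 : ({a, b} : Finset α).card ≤ 2 := (Finset.card_insert_le _ _).trans (by simp)
        have e2 : ({c, d} : Finset α).card ≤ 2 := (Finset.card_insert_le _ _).trans (by simp)
        have e3 := Finset.card_union_le ({a, b} : Finset α) ({c, d} : Finset α)
        omega
    -- each tᵢ ∈ {t₁, t₁ * g}
    have hmem : ∀ t : Equiv.Perm α, t.IsSwap → (t * g).IsSwap → t = t₁ ∨ t = t₁ * g := by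
      intro t ht hs
      obtain ⟨x, hx, hform'⟩ := hform t ht hs
      rw [hgsupp] at hx
      simp only [Finset.mem_union, Finset.mem_insert, Finset.mem_singleton] at hx
      rcases hx with (rfl | rfl) | (rfl | rfl)
      · left; rw [hform', hga, ht1]
      · left; rw [hform', hgb, ht1, Equiv.swap_comm]
      · right; rw [hform', hgc, hs1]
      · right; rw [hform', hgd, hs1, Equiv.swap_comm]
    rcases hmem t₂ h2 h2' with h | h
    · exact h12 h.symm
    rcases hmem t₃ h3 h3' with h' | h'
    · exact h13 h'.symm
    exact h23 (h.trans h'.symm)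

end helpers


lemma sixCycle_aux {V : Type*} {G : SimpleGraph V}
    (h6 : ∀ (v : V) (c : G.Walk v v), c.IsCycle → c.length ≠ 6)
    {a b c d e f : V}
    (h1 : G.Adj a b) (h2 : G.Adj b c) (h3 : G.Adj c d) (h4 : G.Adj d e) (h5 : G.Adj e f)
    (h0 : G.Adj f a)
    (hac : a ≠ c) (had : a ≠ d) (hae : a ≠ e)
    (hbd : b ≠ d) (hbe : b ≠ e) (hbf : b ≠ f)
    (hce : c ≠ e) (hcf : c ≠ f) (hdf : d ≠ f) : False := by
  have hab := h1.ne
  have hbc := h2.ne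
  have hcd := h3.ne
  have hde := h4.ne
  have hef := h5.ne
  have hfa := h0.ne
  have hca := hac.symm; have hda := had.symm; have hea := hae.symm
  have hdb := hbd.symm; have heb := hbe.symm; have hfb := hbf.symm
  have hec := hce.symm; have hfc := hcf.symm; have hfd := hdf.symm
  have hba := hab.symm; have hcb := hbc.symm; have hdc := hcd.symm
  have hed := hde.symm; have hfe := hef.symm; have haf := hfa.symm
  refine h6 a (SimpleGraph.Walk.cons h1 (SimpleGraph.Walk.cons h2 (SimpleGraph.Walk.cons h3
    (SimpleGraph.Walk.cons h4 (SimpleGraph.Walk.cons h5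
    (SimpleGraph.Walk.cons h0 SimpleGraph.Walk.nil)))))) ?_ rfl
  simp only [SimpleGraph.Walk.isCycle_def, SimpleGraph.Walk.isTrail_def,
    SimpleGraph.Walk.edges_cons, SimpleGraph.Walk.edges_nil, SimpleGraph.Walk.support_cons,
    SimpleGraph.Walk.support_nil, List.tail_cons, List.nodup_cons, List.mem_cons,
    List.not_mem_nil, or_false, List.nodup_nil, and_true, Sym2.eq, Sym2.rel_iff',
    Prod.mk.injEq, Prod.swap_prod_mk, ne_eq,
    not_false_eq_true, true_and, List.mem_singleton, reduceCtorEq]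
  push_neg
  tauto

lemma no_four_common {n : ℕ} {a u x₁ x₂ x₃ x₄ : Equiv.Perm (Fin n)} (hau : a ≠ u)
    (c1 : (CT n).Adj a x₁) (d1 : (CT n).Adj u x₁)
    (c2 : (CT n).Adj a x₂) (d2 : (CT n).Adj u x₂)
    (c3 : (CT n).Adj a x₃) (d3 : (CT n).Adj u x₃)
    (c4 : (CT n).Adj a x₄) (d4 : (CT n).Adj u x₄)
    (e12 : x₁ ≠ x₂) (e13 : x₁ ≠ x₃) (e14 : x₁ ≠ x₄)
    (e23 : x₂ ≠ x₃) (e24 : x₂ ≠ x₄) (e34 : x₃ ≠ x₄) : False := by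
  have hg : a * u⁻¹ ≠ 1 := by
    simpa [mul_inv_eq_one] using hau
  have key : ∀ x : Equiv.Perm (Fin n), (CT n).Adj u x → ((x * a⁻¹) * (a * u⁻¹)).IsSwap := by
    intro x hx
    have h : x * a⁻¹ * (a * u⁻¹) = x * u⁻¹ := by group
    rw [h]
    exact hx
  have hne : ∀ x y : Equiv.Perm (Fin n), x ≠ y → x * a⁻¹ ≠ y * a⁻¹ :=
    fun x y h h' => h (mul_right_cancel h')
  exact four_swaps hg c1 (key _ d1) c2 (key _ d2) c3 (key _ d3) c4 (key _ d4)
    (hne _ _ e12) (hne _ _ e13) (hne _ _ e14) (hne _ _ e23) (hne _ _ e24) (hne _ _ e34)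

/-- For a fixed edge `{u,z}` of `CT n` and a `C₆`-free, triangle-free subgraph `G`,
at most two 4-cycles `u - z - p.1 - p.2 - u` of `CT n` through the edge have their
other three edges in `G`. -/
theorem stmt_17 {n : ℕ} (hn : 3 ≤ n) (G : SimpleGraph (Equiv.Perm (Fin n))) (hG : G ≤ CT n)
    (h6 : ∀ (v : Equiv.Perm (Fin n)) (c : G.Walk v v), c.IsCycle → c.length ≠ 6)
    (h3 : G.CliqueFree 3)
    (u z : Equiv.Perm (Fin n)) (huz : (CT n).Adj u z) :
    Nat.card {p : Equiv.Perm (Fin n) × Equiv.Perm (Fin n) |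
      G.Adj z p.1 ∧ G.Adj p.1 p.2 ∧ G.Adj p.2 u ∧ p.1 ≠ u ∧ p.2 ≠ z} ≤ 2 := by
  classical
  by_contra hlt
  push_neg at hlt
  rw [Nat.card_coe_set_eq, Set.ncard_eq_toFinset_card'] at hlt
  obtain ⟨p, q, r, hp, hq, hr, hpq, hpr, hqr⟩ := Finset.two_lt_card_iff.1 hlt
  rw [Set.mem_toFinset, Set.mem_setOf_eq] at hp hq hr
  obtain ⟨hp1, hp2, hp3, hp4, hp5⟩ := hp
  obtain ⟨hq1, hq2, hq3, hq4, hq5⟩ := hq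
  obtain ⟨hr1, hr2, hr3, hr4, hr5⟩ := hr
  have hzu : z ≠ u := huz.ne'
  have tri : ∀ x y w, G.Adj x y → G.Adj x w → G.Adj y w → False := fun x y w a1 a2 a3 =>
    h3 {x, y, w} (SimpleGraph.is3Clique_triple_iff.2 ⟨a1, a2, a3⟩)
  have share : ∀ s t : Equiv.Perm (Fin n) × Equiv.Perm (Fin n),
      G.Adj z s.1 → G.Adj s.1 s.2 → G.Adj s.2 u → s.1 ≠ u → s.2 ≠ z →
      G.Adj z t.1 → G.Adj t.1 t.2 → G.Adj t.2 u → t.1 ≠ u → t.2 ≠ z →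
      s.1 ≠ t.1 → s.2 ≠ t.2 → False := by
    intro s t hs1 hs2 hs3 hs4 hs5 ht1 ht2 ht3 ht4 ht5 hne1 hne2
    by_cases hA : s.1 = t.2
    · exact tri s.1 s.2 u hs2 (by rw [hA]; exact ht3) hs3
    by_cases hB : s.2 = t.1
    · exact tri z s.1 s.2 hs1 (by rw [hB]; exact ht1) hs2
    · exact sixCycle_aux h6 hs1 hs2 hs3 ht3.symm ht2.symm ht1.symm
        hs5.symm hzu ht5.symm hs4 hA hne1 hne2 hB ht4.symm
  have sameFirst : ∀ s t w : Equiv.Perm (Fin n) × Equiv.Perm (Fin n),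
      G.Adj z s.1 → G.Adj s.1 s.2 → G.Adj s.2 u → s.1 ≠ u → s.2 ≠ z →
      G.Adj t.1 t.2 → G.Adj t.2 u → t.2 ≠ z →
      G.Adj w.1 w.2 → G.Adj w.2 u → w.2 ≠ z →
      s.1 = t.1 → s.1 = w.1 → s.2 ≠ t.2 → s.2 ≠ w.2 → t.2 ≠ w.2 → False := by
    intro s t w hs1 hs2 hs3 hs4 hs5 ht2 ht3 ht5 hw2 hw3 hw5 e1 e2 n1 n2 n3
    exact no_four_common hs4 (hG hs1.symm) huz (hG hs2) (hG hs3.symm)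
      (hG (show G.Adj s.1 t.2 by rw [e1]; exact ht2)) (hG ht3.symm)
      (hG (show G.Adj s.1 w.2 by rw [e2]; exact hw2)) (hG hw3.symm)
      hs5.symm ht5.symm hw5.symm n1 n2 n3
  have sameSecond : ∀ s t w : Equiv.Perm (Fin n) × Equiv.Perm (Fin n),
      G.Adj z s.1 → G.Adj s.1 s.2 → G.Adj s.2 u → s.1 ≠ u → s.2 ≠ z →
      G.Adj z t.1 → G.Adj t.1 t.2 → t.1 ≠ u →
      G.Adj z w.1 → G.Adj w.1 w.2 → w.1 ≠ u →
      s.2 = t.2 → s.2 = w.2 → s.1 ≠ t.1 → s.1 ≠ w.1 → t.1 ≠ w.1 → False := by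
    intro s t w hs1 hs2 hs3 hs4 hs5 ht1 ht2 ht4 hw1 hw2 hw4 e1 e2 n1 n2 n3
    exact no_four_common hs5.symm huz.symm (hG hs3) (hG hs1) (hG hs2.symm)
      (hG ht1) (hG (show G.Adj s.2 t.1 by rw [e1]; exact ht2.symm))
      (hG hw1) (hG (show G.Adj s.2 w.1 by rw [e2]; exact hw2.symm))
      hs4.symm ht4.symm hw4.symm n1 n2 n3
  have sc_pq : p.1 = q.1 ∨ p.2 = q.2 := by
    by_contra h
    push_neg at h
    exact share p q hp1 hp2 hp3 hp4 hp5 hq1 hq2 hq3 hq4 hq5 h.1 h.2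
  have sc_pr : p.1 = r.1 ∨ p.2 = r.2 := by
    by_contra h
    push_neg at h
    exact share p r hp1 hp2 hp3 hp4 hp5 hr1 hr2 hr3 hr4 hr5 h.1 h.2
  have sc_qr : q.1 = r.1 ∨ q.2 = r.2 := by
    by_contra h
    push_neg at h
    exact share q r hq1 hq2 hq3 hq4 hq5 hr1 hr2 hr3 hr4 hr5 h.1 h.2
  rcases sc_pq with e | e
  · rcases sc_pr with e' | e'
    · exact sameFirst p q r hp1 hp2 hp3 hp4 hp5 hq2 hq3 hq5 hr2 hr3 hr5 e e'
        (fun h => hpq (Prod.ext e h)) (fun h => hpr (Prod.ext e' h))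
        (fun h => hqr (Prod.ext (e.symm.trans e') h))
    · rcases sc_qr with e'' | e''
      · exact sameFirst p q r hp1 hp2 hp3 hp4 hp5 hq2 hq3 hq5 hr2 hr3 hr5 e (e.trans e'')
          (fun h => hpq (Prod.ext e h)) (fun h => hpr (Prod.ext (e.trans e'') h))
          (fun h => hqr (Prod.ext e'' h))
      · exact hpq (Prod.ext e (e'.trans e''.symm))
  · rcases sc_pr with e' | e'
    · rcases sc_qr with e'' | e''
      · exact hpq (Prod.ext (e'.trans e''.symm) e)
      · exact hpr (Prod.ext e' (e.trans e''))
    · exact sameSecond p q r hp1 hp2 hp3 hp4 hp5 hq1 hq2 hq4 hr1 hr2 hr4 e e'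
        (fun h => hpq (Prod.ext h e)) (fun h => hpr (Prod.ext h e'))
        (fun h => hqr (Prod.ext h (e.symm.trans e')))
end

section
/- Suppose G is a spanning subgraph of CT_n and C = (u_1, ..., u_l, u_1) is an l-cycle (l ≥ 3) such that for each j there exists w_j ∉ {x} with (u_j, w_j, u_{j+1}) a 2-path in G, where all u_j are neighbors of a common vertex x in CT_n and consecutive u_j, u_{j+1} satisfy the conditions of the auxiliary graph G_x^i (their edges to x have supports intersecting in δ_i points). Then G contains a 2l-cycle, namely (u_1, w_1, u_2, w_2, ..., u_l, w_l, u_1) with the w_j pairwise distinct. -/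
namespace Stmt18Aux

open Equiv Equiv.Perm Finset SimpleGraph

variable {α : Type*} [DecidableEq α] [Fintype α]

/-- A transposition is determined by a single non-fixed point. -/
lemma swap_det {s : Equiv.Perm α} (hs : s.IsSwap) {p q : α} (hpq : p ≠ q) (h : s p = q) :
    s = Equiv.swap p q := by
  obtain ⟨a, b, hab, rfl⟩ := hs
  rcases eq_or_ne p a with rfl | hpa
  · rw [Equiv.swap_apply_left] at h; subst h; rfl
  rcases eq_or_ne p b with rfl | hpb
  · rw [Equiv.swap_apply_right] at h; subst h; rw [Equiv.swap_comm]
  · rw [Equiv.swap_apply_of_ne_of_ne hpa hpb] at h; exact absurd h hpq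

lemma swap_mul_self' {s : Equiv.Perm α} (hs : s.IsSwap) : s * s = 1 := by
  obtain ⟨a, b, hab, rfl⟩ := hs
  exact Equiv.swap_mul_self a b

lemma swap_inv' {σ : Equiv.Perm α} (h : σ.IsSwap) : σ⁻¹.IsSwap := by
  obtain ⟨a, b, hab, rfl⟩ := h
  exact ⟨a, b, hab, (Equiv.swap_inv a b).symm⟩

lemma support_subset_of_mul_isSwap {t g : Equiv.Perm α} (ht : t.IsSwap) (hg : g ≠ 1)
    (hts : (t * g).IsSwap) : t.support ⊆ g.support := by
  intro p hp
  by_contra hpg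
  have hgp : g p = p := Equiv.Perm.notMem_support.mp hpg
  have hne : p ≠ t p := (Equiv.Perm.mem_support.mp hp).symm
  have h1 : (t * g) p = t p := by rw [Equiv.Perm.mul_apply, hgp]
  have e1 : t * g = Equiv.swap p (t p) := swap_det hts hne h1
  have e2 : t = Equiv.swap p (t p) := swap_det ht hne rfl
  apply hg
  have h3 : t * g = t := e1.trans e2.symm
  calc g = t⁻¹ * (t * g) := by group
    _ = t⁻¹ * t := by rw [h3]
    _ = 1 := inv_mul_cancel t

/-- Uniqueness of the factorization of a permutation as a product of two disjoint
transpositions. -/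
lemma disjoint_factor {t s t' s' : Equiv.Perm α} (ht : t.IsSwap) (hs : s.IsSwap)
    (ht' : t'.IsSwap) (hs' : s'.IsSwap)
    (hd : Disjoint t.support s.support) (hd' : Disjoint t'.support s'.support)
    (h : t * s = t' * s') : t' = t ∨ t' = s := by
  obtain ⟨a, b, hab, he⟩ := id ht'
  have hpa : a ∈ t'.support := by
    rw [he, Equiv.Perm.support_swap hab]; simp
  have hs'a : s' a = a :=
    Equiv.Perm.notMem_support.mp (Finset.disjoint_left.mp hd' hpa)
  have hta : (t * s) a = t' a := by rw [h, Equiv.Perm.mul_apply, hs'a]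
  have ht'a : t' a ≠ a := Equiv.Perm.mem_support.mp hpa
  have hmem : a ∈ t.support ∨ a ∈ s.support := by
    have h1 : a ∈ (t * s).support := Equiv.Perm.mem_support.mpr (by rw [hta]; exact ht'a)
    have h2 := Equiv.Perm.support_mul_le t s h1
    simpa using h2
  rcases hmem with hm | hm
  · left
    have hsa : s a = a := Equiv.Perm.notMem_support.mp (Finset.disjoint_left.mp hd hm)
    have h2 : (t * s) a = t a := by rw [Equiv.Perm.mul_apply, hsa]
    have h3 : t' a = t a := by rw [← hta, h2]
    have hta_ne : a ≠ t a := (Equiv.Perm.mem_support.mp hm).symm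
    have e1 : t = Equiv.swap a (t a) := swap_det ht hta_ne rfl
    have e2 : t' = Equiv.swap a (t a) := swap_det ht' hta_ne h3
    exact e2.trans e1.symm
  · right
    have hat : a ∉ t.support := Finset.disjoint_right.mp hd hm
    have hsa : s a ≠ a := Equiv.Perm.mem_support.mp hm
    have hsas : s a ∈ s.support := by
      rw [Equiv.Perm.mem_support]
      have : s (s a) = a := by
        have := swap_mul_self' hs
        calc s (s a) = (s * s) a := rfl
          _ = a := by rw [this]; rfl
      rw [this]; exact fun hh => hsa hh.symm
    have htsa : t (s a) = s a :=
      Equiv.Perm.notMem_support.mp (Finset.disjoint_right.mp hd hsas)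
    have h2 : (t * s) a = s a := by rw [Equiv.Perm.mul_apply, htsa]
    have h3 : t' a = s a := by rw [← hta, h2]
    have hsa_ne : a ≠ s a := hsa.symm
    have e1 : s = Equiv.swap a (s a) := swap_det hs hsa_ne rfl
    have e2 : t' = Equiv.swap a (s a) := swap_det ht' hsa_ne h3
    exact e2.trans e1.symm

/-- If three distinct transpositions all map to transpositions upon right
multiplication by `g ≠ 1`, then `g` has support of size 3. -/
lemma keycard {t₁ t₂ t₃ g : Equiv.Perm α} (hg : g ≠ 1)
    (h1 : t₁.IsSwap) (h2 : t₂.IsSwap) (h3 : t₃.IsSwap)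
    (h12 : t₁ ≠ t₂) (h13 : t₁ ≠ t₃) (h23 : t₂ ≠ t₃)
    (m1 : (t₁ * g).IsSwap) (m2 : (t₂ * g).IsSwap) (m3 : (t₃ * g).IsSwap) :
    g.support.card = 3 := by
  have fac : ∀ t : Equiv.Perm α, t.IsSwap → t * (t * g) = g := by
    intro t ht
    rw [← mul_assoc, swap_mul_self' ht, one_mul]
  have main : ∀ t : Equiv.Perm α, t.IsSwap → (t * g).IsSwap →
      ¬ Disjoint t.support (t * g).support → g.support.card = 3 := by
    intro t ht hts hnd
    have hsub : g.support ⊆ t.support ∪ (t * g).support := by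
      intro p hp
      have hp' : p ∈ (t * (t * g)).support := by rw [fac t ht]; exact hp
      simpa using Equiv.Perm.support_mul_le t (t * g) hp'
    have hct : t.support.card = 2 := Equiv.Perm.card_support_eq_two.mpr ht
    have hcs : (t * g).support.card = 2 := Equiv.Perm.card_support_eq_two.mpr hts
    have hinter : 1 ≤ (t.support ∩ (t * g).support).card :=
      Finset.card_pos.mpr (Finset.not_disjoint_iff_nonempty_inter.mp hnd)
    have hui := Finset.card_union_add_card_inter t.support (t * g).support
    have hle : g.support.card ≤ 3 := by
      have := Finset.card_le_card hsub
      omega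
    have hne2 : g.support.card ≠ 2 := by
      intro hc
      have hgs : g.IsSwap := Equiv.Perm.card_support_eq_two.mp hc
      have hsg := hgs.sign_eq
      have hsg1 : Equiv.Perm.sign g = 1 := by
        rw [← fac t ht, map_mul, ht.sign_eq, hts.sign_eq]
        norm_num
      rw [hsg1] at hsg
      exact absurd hsg (by decide)
    have hne0 : g.support.card ≠ 0 := by
      rw [Ne, Finset.card_eq_zero, Equiv.Perm.support_eq_empty_iff]
      exact hg
    have hne1 := Equiv.Perm.card_support_ne_one g
    omega
  by_cases hd1 : Disjoint t₁.support (t₁ * g).support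
  · by_cases hd2 : Disjoint t₂.support (t₂ * g).support
    · by_cases hd3 : Disjoint t₃.support (t₃ * g).support
      · exfalso
        have e2 := disjoint_factor h1 m1 h2 m2 hd1 hd2 ((fac t₁ h1).trans (fac t₂ h2).symm)
        have e3 := disjoint_factor h1 m1 h3 m3 hd1 hd3 ((fac t₁ h1).trans (fac t₃ h3).symm)
        rcases e2 with e2 | e2
        · exact h12 e2.symm
        rcases e3 with e3 | e3
        · exact h13 e3.symm
        exact h23 (e2.trans e3.symm)
      · exact main t₃ h3 m3 hd3
    · exact main t₂ h2 m2 hd2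
  · exact main t₁ h1 m1 hd1

/-- Two distinct neighbors of a common vertex in `CT n` are not adjacent (parity). -/
lemma not_isSwap_mul {n : ℕ} {x a b : Equiv.Perm (Fin n)} (ha : (a * x⁻¹).IsSwap)
    (hb : (b * x⁻¹).IsSwap) : ¬ (a * b⁻¹).IsSwap := by
  intro h
  have he : a * b⁻¹ = (a * x⁻¹) * (b * x⁻¹)⁻¹ := by group
  have hs := h.sign_eq
  rw [he, map_mul, map_inv, ha.sign_eq, hb.sign_eq] at hs
  norm_num at hs

/-- Build a walk visiting `f 0, f 1, …, f m`. -/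
def mkWalk {V : Type*} (G : SimpleGraph V) (f : ℕ → V) :
    (m : ℕ) → (∀ k < m, G.Adj (f k) (f (k + 1))) → G.Walk (f 0) (f m)
  | 0, _ => SimpleGraph.Walk.nil
  | (m + 1), h =>
    (mkWalk G f m fun k hk => h k (Nat.lt_succ_of_lt hk)).concat (h m (Nat.lt_succ_self m))

lemma mkWalk_length {V : Type*} (G : SimpleGraph V) (f : ℕ → V) :
    ∀ (m : ℕ) (h : ∀ k < m, G.Adj (f k) (f (k + 1))), (mkWalk G f m h).length = m
  | 0, _ => rfl
  | (m + 1), h => by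
    simp [mkWalk, SimpleGraph.Walk.length_concat, mkWalk_length G f m]

lemma mkWalk_support {V : Type*} (G : SimpleGraph V) (f : ℕ → V) :
    ∀ (m : ℕ) (h : ∀ k < m, G.Adj (f k) (f (k + 1))),
      (mkWalk G f m h).support = (List.range (m + 1)).map f
  | 0, _ => by simp [mkWalk, List.range_succ]
  | (m + 1), h => by
    simp [mkWalk, SimpleGraph.Walk.support_concat, mkWalk_support G f m, List.range_succ]

lemma mkWalk_edges {V : Type*} (G : SimpleGraph V) (f : ℕ → V) :
    ∀ (m : ℕ) (h : ∀ k < m, G.Adj (f k) (f (k + 1))),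
      (mkWalk G f m h).edges = (List.range m).map (fun k => s(f k, f (k + 1)))
  | 0, _ => rfl
  | (m + 1), h => by
    simp [mkWalk, SimpleGraph.Walk.edges_concat, mkWalk_edges G f m, List.range_succ]

end Stmt18Aux

open Stmt18Aux in
/-- If `(u 0, …, u (l-1))` is an `l`-cycle in the auxiliary graph `G_x^i` (the `u j`
are neighbors of `x` in `CT n`, consecutive supports of `u j * x⁻¹` either pairwise
disjoint (case `i = 0`) or all meeting in a single common point `i`, witnessed by
midpoints `w j ≠ x` of 2-paths in `G`), then the `w j` are pairwise distinct and
`G` contains a `2l`-cycle. -/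
theorem stmt_18 {n l : ℕ} (hn : 3 ≤ n) (hl : 3 ≤ l)
    (G : SimpleGraph (Equiv.Perm (Fin n))) (hG : G ≤ CT n)
    (x : Equiv.Perm (Fin n)) (u w : ℕ → Equiv.Perm (Fin n))
    (hux : ∀ j < l, (CT n).Adj x (u j))
    (hclosed : u l = u 0)
    (huinj : ∀ i j, i < l → j < l → u i = u j → i = j)
    (hw : ∀ j < l, w j ≠ x ∧ G.Adj (u j) (w j) ∧ G.Adj (w j) (u (j + 1)))
    (hsupp : (∀ j < l, Disjoint ((u j * x⁻¹).support) ((u (j + 1) * x⁻¹).support)) ∨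
      (∃ i : Fin n, ∀ j < l,
        (u j * x⁻¹).support ∩ (u (j + 1) * x⁻¹).support = {i})) :
    (∀ i j, i < l → j < l → w i = w j → i = j) ∧
    ∃ (v : Equiv.Perm (Fin n)) (c : G.Walk v v), c.IsCycle ∧ c.length = 2 * l := by
  have htk : ∀ k, k ≤ l → (u k * x⁻¹).IsSwap := by
    intro k hk
    rcases eq_or_lt_of_le hk with rfl | h
    · rw [hclosed]; exact hux 0 (by omega)
    · exact hux k h
  have huext : ∀ a b, a ≤ l → b ≤ l → u a = u b →
      a = b ∨ (a = 0 ∧ b = l) ∨ (a = l ∧ b = 0) := by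
    intro a b ha hb hab
    rcases eq_or_lt_of_le ha with rfl | ha'
    · rcases eq_or_lt_of_le hb with rfl | hb'
      · exact Or.inl rfl
      · have h0 := huinj 0 b (by omega) hb' (by rw [← hclosed]; exact hab)
        exact Or.inr (Or.inr ⟨rfl, h0.symm⟩)
    · rcases eq_or_lt_of_le hb with rfl | hb'
      · have h0 := huinj a 0 ha' (by omega) (hab.trans hclosed)
        exact Or.inr (Or.inl ⟨h0, rfl⟩)
      · exact Or.inl (huinj a b ha' hb' hab)
  -- u's and w's are distinct
  have uwne : ∀ k m, k ≤ l → m < l → u k ≠ w m := by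
    intro k m hk hm he
    have hadj : G.Adj (u m) (w m) := (hw m hm).2.1
    have hadj' : (CT n).Adj (u m) (w m) := hG hadj
    have hswap : (w m * (u m)⁻¹).IsSwap := hadj'
    rw [← he] at hswap
    exact not_isSwap_mul (htk k hk) (htk m (le_of_lt hm)) hswap
  -- w injectivity
  have winj2 : ∀ i j, i < j → j < l → w i ≠ w j := by
    intro i j hij hj heq
    have hi : i < l := lt_trans hij hj
    obtain ⟨hwx, hadj1, hadj2⟩ := hw i hi
    obtain ⟨hwx', hadj1', hadj2'⟩ := hw j hj
    set W : Equiv.Perm (Fin n) := w i with hW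
    set g : Equiv.Perm (Fin n) := x * W⁻¹ with hgdef
    have hg : g ≠ 1 := by
      rw [hgdef, Ne, mul_inv_eq_one]
      exact fun h => hwx h.symm
    have si : (u i * W⁻¹).IsSwap := by
      have h0 : (W * (u i)⁻¹).IsSwap := hG hadj1
      have := swap_inv' h0
      simpa [mul_inv_rev] using this
    have si1 : (u (i + 1) * W⁻¹).IsSwap := hG hadj2
    have sj : (u j * W⁻¹).IsSwap := by
      have h0 : (w j * (u j)⁻¹).IsSwap := hG hadj1'
      rw [← heq] at h0
      have := swap_inv' h0
      simpa [mul_inv_rev] using this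
    have sj1 : (u (j + 1) * W⁻¹).IsSwap := by
      have h0 : (u (j + 1) * (w j)⁻¹).IsSwap := hG hadj2'
      rwa [← heq] at h0
    have hmulg : ∀ k : ℕ, (u k * x⁻¹) * g = u k * W⁻¹ := by
      intro k; rw [hgdef]; group
    -- pick a third index c among {j, j+1}
    obtain ⟨c, hcl, hcj, hne1, hne2⟩ :
        ∃ c, c ≤ l ∧ (c = j ∨ c = j + 1) ∧ u c ≠ u i ∧ u c ≠ u (i + 1) := by
      by_cases hji : j = i + 1
      · refine ⟨j + 1, by omega, Or.inr rfl, fun h => ?_, fun h => ?_⟩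
        · rcases huext _ _ (by omega) (by omega) h with h' | h' | h' <;> omega
        · rcases huext _ _ (by omega) (by omega) h with h' | h' | h' <;> omega
      · refine ⟨j, by omega, Or.inl rfl, fun h => ?_, fun h => ?_⟩
        · rcases huext _ _ (by omega) (by omega) h with h' | h' | h' <;> omega
        · rcases huext _ _ (by omega) (by omega) h with h' | h' | h' <;> omega
    have hu_ii1 : u i ≠ u (i + 1) := by
      intro h
      rcases huext _ _ (by omega) (by omega) h with h' | h' | h' <;> omega
    have scW : (u c * W⁻¹).IsSwap := by
      rcases hcj with rfl | rfl
      · exact sj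
      · exact sj1
    have hi1l : i + 1 ≤ l := by omega
    have hcard : g.support.card = 3 := by
      refine keycard hg (htk i (by omega)) (htk (i + 1) hi1l) (htk c hcl)
        (fun h => hu_ii1 (mul_right_cancel h))
        (fun h => hne1 (mul_right_cancel h).symm)
        (fun h => hne2 (mul_right_cancel h).symm)
        ?_ ?_ ?_
      · rw [hmulg]; exact si
      · rw [hmulg]; exact si1
      · rw [hmulg]; exact scW
    have hsub : ∀ k, k ≤ l → (u k * W⁻¹).IsSwap → (u k * x⁻¹).support ⊆ g.support := by
      intro k hk hkW
      refine support_subset_of_mul_isSwap (htk k hk) hg ?_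
      rw [hmulg]; exact hkW
    have c1 : (u i * x⁻¹).support ⊆ g.support := hsub i (by omega) si
    have c2 : (u (i + 1) * x⁻¹).support ⊆ g.support := hsub (i + 1) hi1l si1
    have c3 : (u c * x⁻¹).support ⊆ g.support := hsub c hcl scW
    rcases hsupp with hdisj | ⟨i₀, hsing⟩
    · have d := hdisj i hi
      have hle : ((u i * x⁻¹).support ∪ (u (i + 1) * x⁻¹).support).card ≤ 3 := by
        rw [← hcard]
        exact Finset.card_le_card (Finset.union_subset c1 c2)
      rw [Finset.card_union_of_disjoint d,
        Equiv.Perm.card_support_eq_two.mpr (htk i (by omega)),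
        Equiv.Perm.card_support_eq_two.mpr (htk (i + 1) hi1l)] at hle
      omega
    · have hmi : i₀ ∈ (u i * x⁻¹).support ∧ i₀ ∈ (u (i + 1) * x⁻¹).support := by
        have h0 : i₀ ∈ (u i * x⁻¹).support ∩ (u (i + 1) * x⁻¹).support := by
          rw [hsing i hi]; exact Finset.mem_singleton_self i₀
        exact Finset.mem_inter.mp h0
      have hmc : i₀ ∈ (u c * x⁻¹).support := by
        have h0 : i₀ ∈ (u j * x⁻¹).support ∩ (u (j + 1) * x⁻¹).support := by
          rw [hsing j hj]; exact Finset.mem_singleton_self i₀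
        rcases hcj with rfl | rfl
        · exact (Finset.mem_inter.mp h0).1
        · exact (Finset.mem_inter.mp h0).2
      -- pigeonhole: i₀ and the three "other points" are 4 distinct elements of a 3-set
      set a₁ : Fin n := (u i * x⁻¹) i₀ with ha₁
      set a₂ : Fin n := (u (i + 1) * x⁻¹) i₀ with ha₂
      set a₃ : Fin n := (u c * x⁻¹) i₀ with ha₃
      have h01 : i₀ ≠ a₁ := (Equiv.Perm.mem_support.mp hmi.1).symm
      have h02 : i₀ ≠ a₂ := (Equiv.Perm.mem_support.mp hmi.2).symm
      have h03 : i₀ ≠ a₃ := (Equiv.Perm.mem_support.mp hmc).symm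
      have e1 : u i * x⁻¹ = Equiv.swap i₀ a₁ := swap_det (htk i (by omega)) h01 rfl
      have e2 : u (i + 1) * x⁻¹ = Equiv.swap i₀ a₂ := swap_det (htk (i + 1) hi1l) h02 rfl
      have e3 : u c * x⁻¹ = Equiv.swap i₀ a₃ := swap_det (htk c hcl) h03 rfl
      have h12' : a₁ ≠ a₂ := by
        intro h
        apply hu_ii1
        have : u i * x⁻¹ = u (i + 1) * x⁻¹ := by rw [e1, e2, h]
        exact mul_right_cancel this
      have h13' : a₁ ≠ a₃ := by
        intro h
        apply hne1
        have : u c * x⁻¹ = u i * x⁻¹ := by rw [e1, e3, h]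
        exact mul_right_cancel this
      have h23' : a₂ ≠ a₃ := by
        intro h
        apply hne2
        have : u c * x⁻¹ = u (i + 1) * x⁻¹ := by rw [e2, e3, h]
        exact mul_right_cancel this
      have hsubs : ({i₀, a₁, a₂, a₃} : Finset (Fin n)) ⊆ g.support := by
        intro p hp
        simp only [Finset.mem_insert, Finset.mem_singleton] at hp
        rcases hp with rfl | rfl | rfl | rfl
        · exact c1 hmi.1
        · exact c1 ((Equiv.Perm.apply_mem_support).mpr hmi.1)
        · exact c2 ((Equiv.Perm.apply_mem_support).mpr hmi.2)
        · exact c3 ((Equiv.Perm.apply_mem_support).mpr hmc)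
      have hc4 : ({i₀, a₁, a₂, a₃} : Finset (Fin n)).card = 4 := by
        rw [Finset.card_insert_of_notMem (by simp [h01, h02, h03]),
          Finset.card_insert_of_notMem (by simp [h12', h13']),
          Finset.card_insert_of_notMem (by simp [h23'])]
        rfl
      have := Finset.card_le_card hsubs
      omega
  have winj : ∀ i j, i < l → j < l → w i = w j → i = j := by
    intro i j hi hj hij
    rcases lt_trichotomy i j with h | h | h
    · exact absurd hij (winj2 i j h hj)
    · exact h
    · exact absurd hij.symm (winj2 j i h hi)
  refine ⟨winj, ?_⟩
  -- build the 2l-cycle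
  set f : ℕ → Equiv.Perm (Fin n) := fun k => if k % 2 = 0 then u (k / 2) else w (k / 2)
    with hfdef
  have hfe : ∀ k, k % 2 = 0 → f k = u (k / 2) := by
    intro k h; rw [hfdef]; simp [h]
  have hfo : ∀ k, k % 2 = 1 → f k = w (k / 2) := by
    intro k h; rw [hfdef]; simp [h]
  have hstep : ∀ k, k < 2 * l - 1 → G.Adj (f k) (f (k + 1)) := by
    intro k hk
    rcases Nat.mod_two_eq_zero_or_one k with h2 | h2
    · rw [hfe k h2, hfo (k + 1) (by omega), show (k + 1) / 2 = k / 2 from by omega]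
      exact (hw (k / 2) (by omega)).2.1
    · rw [hfo k h2, hfe (k + 1) (by omega), show (k + 1) / 2 = k / 2 + 1 from by omega]
      exact (hw (k / 2) (by omega)).2.2
  have finj : ∀ a b, a < 2 * l → b < 2 * l → f a = f b → a = b := by
    intro a b ha hb hab
    rcases Nat.mod_two_eq_zero_or_one a with h2 | h2 <;>
      rcases Nat.mod_two_eq_zero_or_one b with h3 | h3
    · rw [hfe a h2, hfe b h3] at hab
      have := huinj _ _ (by omega) (by omega) hab
      omega
    · rw [hfe a h2, hfo b h3] at hab
      exact absurd hab (uwne _ _ (by omega) (by omega))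
    · rw [hfo a h2, hfe b h3] at hab
      exact absurd hab.symm (uwne _ _ (by omega) (by omega))
    · rw [hfo a h2, hfo b h3] at hab
      have := winj _ _ (by omega) (by omega) hab
      omega
  set P : G.Walk (f 0) (f (2 * l - 1)) := mkWalk G f (2 * l - 1) hstep with hP
  have hPpath : P.IsPath := by
    apply SimpleGraph.Walk.IsPath.mk'
    rw [hP, mkWalk_support, show 2 * l - 1 + 1 = 2 * l from by omega]
    refine List.Nodup.map_on ?_ List.nodup_range
    intro a ha b hb hab
    rw [List.mem_range] at ha hb
    exact finj a b ha hb hab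
  have hadjlast : G.Adj (f 0) (f (2 * l - 1)) := by
    rw [hfe 0 rfl, hfo (2 * l - 1) (by omega), show (0 : ℕ) / 2 = 0 from rfl,
      show (2 * l - 1) / 2 = l - 1 from by omega]
    have h0 := (hw (l - 1) (by omega)).2.2
    rw [show l - 1 + 1 = l from by omega, hclosed] at h0
    exact h0.symm
  have hedge : s(f 0, f (2 * l - 1)) ∉ P.edges := by
    rw [hP, mkWalk_edges]
    intro hmem
    simp only [List.mem_map, List.mem_range] at hmem
    obtain ⟨k, hk, hke⟩ := hmem
    rcases Sym2.eq_iff.mp hke with ⟨hk1, hk2⟩ | ⟨hk1, hk2⟩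
    · have e1 := finj k 0 (by omega) (by omega) hk1
      have e2 := finj (k + 1) (2 * l - 1) (by omega) (by omega) hk2
      omega
    · have e1 := finj k (2 * l - 1) (by omega) (by omega) hk1
      omega
  refine ⟨f 0, SimpleGraph.Walk.cons hadjlast P.reverse, ?_, ?_⟩
  · rw [SimpleGraph.Walk.cons_isCycle_iff]
    refine ⟨hPpath.reverse, ?_⟩
    rw [SimpleGraph.Walk.edges_reverse, List.mem_reverse]
    exact hedge
  · rw [SimpleGraph.Walk.length_cons, SimpleGraph.Walk.length_reverse, hP, mkWalk_length]
    omega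
end
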